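/- arXiv:2605.00388 — 3 statements merged into one kernel-verified Lean document; each statement's English description precedes it below -/
import Mathlib

section
/- (Theorem 3.3.4.) Assume the MPEC setup with f, F continuously differentiable and g twice continuously differentiable, Z = {(x,y) ∈ ℝ^{n+m} : Gx + Hy + a ≤ 0} for G ∈ ℝ^{s×n}, H ∈ ℝ^{s×m}, a ∈ ℝ^s, and let z̄ = (x̄, ȳ) ∈ 𝓕. Assume SBCQ holds at z̄ and the full CQ holds at z̄, i.e., T(z̄; 𝓕) = 𝓛(z̄; 𝓕). Then z̄ is a stationary point of the MPEC if and only if for every λ ∈ M(z̄) and every partition of I₀(z̄, λ) := {i ∈ 𝓘(z̄) : λ_i = 0} into two index sets α and ᾱ, there exist ζ ∈ ℝ^s, η ∈ ℝ^ℓ, π ∈ ℝ^m such that: ∇_x f(z̄) + Gᵀζ + ∇_x g(z̄)ᵀη = ∇_x L(z̄, λ)ᵀπ; ∇_y f(z̄) + Hᵀζ + ∇_y g(z̄)ᵀη = ∇_y L(z̄, λ)ᵀπ; ⟨π, ∇_y g_i(z̄)⟩ ≤ 0 for all i ∈ α; ⟨π, ∇_y g_i(z̄)⟩ = 0 for all i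 ∈ I₊(z̄, λ) := {i ∈ 𝓘(z̄) : λ_i > 0}; η_i ≥ 0 for all i ∈ ᾱ; η_i = 0 for all i ∉ 𝓘(z̄); ζ ≥ 0 and ζᵀ(Gx̄ + Hȳ + a) = 0. -/
open Filter Topology BigOperators

noncomputable section

/-- Vectors in `ℝ^n`. -/
abbrev Vec (n : ℕ) := Fin n → ℝ

/-- Euclidean inner product on `ℝ^n`. -/
def dotp {n : ℕ} (a b : Vec n) : ℝ := ∑ i, a i * b i

/-- The tangent cone to `S` at `z`: all `d` such that there exist points `zs k ∈ S`
with `zs k → z` and scalars `ts k ↓ 0` with `(zs k - z) / ts k → d`. -/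
def tangentCone {E : Type*} [NormedAddCommGroup E] [NormedSpace ℝ E]
    (S : Set E) (z : E) : Set E :=
  {d | ∃ (zs : ℕ → E) (ts : ℕ → ℝ),
    (∀ k, zs k ∈ S) ∧ Tendsto zs atTop (𝓝 z) ∧
    (∀ k, 0 < ts k) ∧ Tendsto ts atTop (𝓝 0) ∧
    Tendsto (fun k => (ts k)⁻¹ • (zs k - z)) atTop (𝓝 d)}

variable {n m l : ℕ}

/-- Lower-level feasible set `C(x) = {y : g(x,y) ≤ 0}`. -/
def lowerC (g : Vec n × Vec m → Vec l) (x : Vec n) : Set (Vec m) :=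
  {y | ∀ i, g (x, y) i ≤ 0}

/-- Lower-level VI solution set `S(x) = SOL(F(x,·), C(x))`. -/
def lowerS (F : Vec n × Vec m → Vec m) (g : Vec n × Vec m → Vec l)
    (x : Vec n) : Set (Vec m) :=
  {y | y ∈ lowerC g x ∧ ∀ v ∈ lowerC g x, 0 ≤ dotp (F (x, y)) (v - y)}

/-- The MPEC feasible set `𝓕 = {(x,y) ∈ Z : y ∈ S(x)}`. -/
def feasSet (F : Vec n × Vec m → Vec m) (g : Vec n × Vec m → Vec l)
    (Z : Set (Vec n × Vec m)) : Set (Vec n × Vec m) :=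
  {z | z ∈ Z ∧ z.2 ∈ lowerS F g z.1}

/-- `j`-th component of the gradient `∇_y g_i(z)`. -/
def gradYg (g : Vec n × Vec m → Vec l) (i : Fin l) (z : Vec n × Vec m) : Vec m :=
  fun j => fderiv ℝ (fun p => g p i) z (0, Pi.single j 1)

/-- `⟨∇_x g_i(z̄), dx⟩`, expressed via the Fréchet derivative in the `x`-slot. -/
def dgX (g : Vec n × Vec m → Vec l) (i : Fin l) (z : Vec n × Vec m) (dx : Vec n) : ℝ :=
  fderiv ℝ (fun p => g p i) z (dx, 0)

/-- `⟨∇_y g_i(z̄), dy⟩`, expressed via the Fréchet derivative in the `y`-slot. -/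
def dgY (g : Vec n × Vec m → Vec l) (i : Fin l) (z : Vec n × Vec m) (dy : Vec m) : ℝ :=
  fderiv ℝ (fun p => g p i) z (0, dy)

/-- Multiplier set `M(z)` of the lower-level VI. -/
def multSet (F : Vec n × Vec m → Vec m) (g : Vec n × Vec m → Vec l)
    (z : Vec n × Vec m) : Set (Vec l) :=
  {lam | (∀ i, 0 ≤ lam i) ∧
    (∀ j, F z j + ∑ i, lam i * gradYg g i z j = 0) ∧
    (∑ i, lam i * g z i = 0)}

/-- VI Lagrangian `L(z, λ) = F(z) + Σ_i λ_i ∇_y g_i(z)`. -/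
def viLag (F : Vec n × Vec m → Vec m) (g : Vec n × Vec m → Vec l)
    (z : Vec n × Vec m) (lam : Vec l) : Vec m :=
  fun j => F z j + ∑ i, lam i * gradYg g i z j

/-- Lifted critical cone `K(z̄, λ)`. -/
def liftedCone (g : Vec n × Vec m → Vec l) (zbar : Vec n × Vec m) (lam : Vec l) :
    Set (Vec n × Vec m) :=
  {d | ∀ i, g zbar i = 0 →
      (lam i = 0 → dgX g i zbar d.1 + dgY g i zbar d.2 ≤ 0) ∧
      (0 < lam i → dgX g i zbar d.1 + dgY g i zbar d.2 = 0)}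

/-- Directional critical set `K(z̄, λ; dx)`. -/
def dirCrit (g : Vec n × Vec m → Vec l) (zbar : Vec n × Vec m) (lam : Vec l)
    (dx : Vec n) : Set (Vec m) :=
  {dy | (dx, dy) ∈ liftedCone g zbar lam}

/-- `∇_x L(z̄, λ) dx`, the partial Jacobian of the VI Lagrangian in `x` applied to `dx`. -/
def jacLx (F : Vec n × Vec m → Vec m) (g : Vec n × Vec m → Vec l)
    (zbar : Vec n × Vec m) (lam : Vec l) (dx : Vec n) : Vec m :=
  fun j => fderiv ℝ (fun z => viLag F g z lam j) zbar (dx, 0)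

/-- `∇_y L(z̄, λ) dy`, the partial Jacobian of the VI Lagrangian in `y` applied to `dy`. -/
def jacLy (F : Vec n × Vec m → Vec m) (g : Vec n × Vec m → Vec l)
    (zbar : Vec n × Vec m) (lam : Vec l) (dy : Vec m) : Vec m :=
  fun j => fderiv ℝ (fun z => viLag F g z lam j) zbar (0, dy)

/-- `dy` solves `AVI(∇_x L(z̄,λ) dx, ∇_y L(z̄,λ), K(z̄,λ;dx))`. -/
def solvesAVI (F : Vec n × Vec m → Vec m) (g : Vec n × Vec m → Vec l)
    (zbar : Vec n × Vec m) (lam : Vec l) (dx : Vec n) (dy : Vec m) : Prop :=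
  dy ∈ dirCrit g zbar lam dx ∧
  ∀ v ∈ dirCrit g zbar lam dx,
    0 ≤ dotp (jacLx F g zbar lam dx + jacLy F g zbar lam dy) (v - dy)

/-- SBCQ at `zbar`: every feasible sequence converging to `zbar` admits a bounded
sequence of multipliers. -/
def SBCQ (F : Vec n × Vec m → Vec m) (g : Vec n × Vec m → Vec l)
    (Z : Set (Vec n × Vec m)) (zbar : Vec n × Vec m) : Prop :=
  ∀ zs : ℕ → Vec n × Vec m, (∀ k, zs k ∈ feasSet F g Z) → Tendsto zs atTop (𝓝 zbar) →
    ∃ lams : ℕ → Vec l, (∀ k, lams k ∈ multSet F g (zs k)) ∧ ∃ C : ℝ, ∀ k, ‖lams k‖ ≤ C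

/-- The MPEC linearized cone `𝓛(z̄; 𝓕)`. -/
def mpecLinCone (F : Vec n × Vec m → Vec m) (g : Vec n × Vec m → Vec l)
    (Z : Set (Vec n × Vec m)) (zbar : Vec n × Vec m) : Set (Vec n × Vec m) :=
  tangentCone Z zbar ∩
    ⋃ lam ∈ multSet F g zbar, {d : Vec n × Vec m | solvesAVI F g zbar lam d.1 d.2}


namespace MpecAux

local notation "⟪" x ", " y "⟫_ℝ" => @inner ℝ _ _ x y

variable {κ : Type*} [Fintype κ] [DecidableEq κ]
variable {ι : Type*} [Fintype ι] [DecidableEq ι]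

/-- The cone generated by `v i`, `i ∈ S`. -/
def coneGen {E : Type*} [NormedAddCommGroup E] [InnerProductSpace ℝ E]
    (v : κ → E) (S : Finset κ) : Set E :=
  {x | ∃ u : κ → ℝ, (∀ i, 0 ≤ u i) ∧ x = ∑ i ∈ S, u i • v i}

variable {E : Type*} [NormedAddCommGroup E] [InnerProductSpace ℝ E] [CompleteSpace E]

/-- The linear combination map. -/
def lcomb {α : Type*} [Fintype α] (v : α → E) : (α → ℝ) →ₗ[ℝ] E where
  toFun u := ∑ i, u i • v i
  map_add' u w := by simp [add_smul, Finset.sum_add_distrib]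
  map_smul' c u := by simp [Finset.smul_sum, smul_smul]

lemma isClosed_coneGen_of_linInd (v : κ → E) (S : Finset κ)
    (h : LinearIndependent ℝ (fun i : S => v i)) :
    IsClosed (coneGen v S) := by
  classical
  have hker : LinearMap.ker (lcomb (fun i : S => v (i : κ))) = ⊥ := by
    rw [LinearMap.ker_eq_bot']
    intro w hw
    have h2 := Fintype.linearIndependent_iff.mp h w
    exact funext fun i => h2 hw i
  obtain ⟨K, hK, hanti⟩ := (lcomb (fun i : S => v (i : κ))).exists_antilipschitzWith hker
  have hcont : Continuous (lcomb (fun i : S => v (i : κ))) :=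
    (lcomb (fun i : S => v (i : κ))).continuous_of_finiteDimensional
  have huc : UniformContinuous (lcomb (fun i : S => v (i : κ))) :=
    ((lcomb (fun i : S => v (i : κ))).toContinuousLinearMap).uniformContinuous
  have hce : IsClosedEmbedding (lcomb (fun i : S => v (i : κ))) :=
    hanti.isClosedEmbedding huc
  have himg : coneGen v S =
      (lcomb (fun i : S => v (i : κ))) '' {w : S → ℝ | ∀ i, 0 ≤ w i} := by
    ext x
    constructor
    · rintro ⟨u, hu, rfl⟩
      refine ⟨fun i => u i, fun i => hu i, ?_⟩
      show ∑ i : S, u i • v (i : κ) = _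
      rw [Finset.sum_coe_sort S (fun i => u i • v i)]
    · rintro ⟨w, hw, rfl⟩
      refine ⟨fun i => if h : i ∈ S then w ⟨i, h⟩ else 0, ?_, ?_⟩
      · intro i
        by_cases h : i ∈ S
        · simpa [h] using hw ⟨i, h⟩
        · simp [h]
      · show _ = ∑ i ∈ S, _
        rw [← Finset.sum_coe_sort S]
        refine (Finset.sum_congr rfl fun i _ => ?_).symm
        simp [i.2]
  rw [himg]
  refine hce.isClosedMap _ ?_
  have : {w : S → ℝ | ∀ i, 0 ≤ w i} = ⋂ i, {w : S → ℝ | 0 ≤ w i} := by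
    ext; simp [Set.mem_iInter]
  rw [this]
  exact isClosed_iInter fun i => isClosed_le continuous_const (continuous_apply i)

lemma coneGen_caratheodory (v : κ → E) :
    ∀ N (S : Finset κ), S.card ≤ N → ∀ x ∈ coneGen v S,
      ∃ T : Finset κ, LinearIndependent ℝ (fun i : T => v i) ∧ x ∈ coneGen v T := by
  classical
  intro N
  induction N with
  | zero =>
    intro S hS x hx
    have hSe : S = ∅ := Finset.card_eq_zero.mp (Nat.le_zero.mp hS)
    subst hSe
    refine ⟨∅, ?_, hx⟩
    have : IsEmpty ((∅ : Finset κ) : Type _) := by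
      simp only [Finset.isEmpty_coe_sort]
    exact linearIndependent_empty_type
  | succ N ih =>
    intro S hS x hx
    by_cases hind : LinearIndependent ℝ (fun i : S => v i)
    · exact ⟨S, hind, hx⟩
    obtain ⟨gg, hgg0, i₀, hgi₀⟩ := Fintype.not_linearIndependent_iff.mp hind
    obtain ⟨u, hu, rfl⟩ := hx
    -- a nontrivial relation supported on S with a positive coefficient
    set c0 : κ → ℝ := fun i => if h : i ∈ S then gg ⟨i, h⟩ else 0 with hc0
    have hc0sum : ∑ i ∈ S, c0 i • v i = 0 := by
      rw [← Finset.sum_coe_sort S]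
      rw [← hgg0]
      refine Finset.sum_congr rfl fun i _ => ?_
      simp [hc0, i.2]
    have hc0i₀ : c0 (i₀ : κ) ≠ 0 := by simp [hc0, i₀.2, hgi₀]
    obtain ⟨d, hdsum, hdsupp, i₁, hi₁S, hi₁⟩ :
        ∃ d : κ → ℝ, (∑ i ∈ S, d i • v i = 0) ∧ (∀ i, i ∉ S → d i = 0) ∧
          ∃ i₁, i₁ ∈ S ∧ 0 < d i₁ := by
      rcases lt_trichotomy (c0 (i₀ : κ)) 0 with hlt | heq | hgt
      · refine ⟨-c0, ?_, ?_, i₀, i₀.2, by simpa using hlt⟩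
        · simp only [Pi.neg_apply, neg_smul, Finset.sum_neg_distrib, hc0sum, neg_zero]
        · intro i hi; simp [hc0, hi]
      · exact absurd heq hc0i₀
      · refine ⟨c0, hc0sum, ?_, i₀, i₀.2, hgt⟩
        intro i hi; simp [hc0, hi]
    set P : Finset κ := S.filter (fun i => 0 < d i) with hP
    have hPne : P.Nonempty := ⟨i₁, by simp [hP, hi₁S, hi₁]⟩
    set t : ℝ := P.inf' hPne (fun i => u i / d i) with ht
    have ht0 : 0 ≤ t := by
      rw [ht]
      apply Finset.le_inf'
      intro i hi
      have hdi : 0 < d i := (Finset.mem_filter.mp hi).2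
      exact div_nonneg (hu i) hdi.le
    obtain ⟨istar, histar, htstar⟩ := Finset.exists_mem_eq_inf' hPne (fun i => u i / d i)
    have histarS : istar ∈ S := (Finset.mem_filter.mp histar).1
    have hdstar : 0 < d istar := (Finset.mem_filter.mp histar).2
    set u' : κ → ℝ := fun i => u i - t * d i with hu'
    have hu'0 : ∀ i, 0 ≤ u' i := by
      intro i
      by_cases hiS : i ∈ S
      · by_cases hdi : 0 < d i
        · have : t ≤ u i / d i := Finset.inf'_le _ (by simp [hP, hiS, hdi])
          have := (le_div_iff₀ hdi).mp this
          simp only [hu']; linarith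
        · push_neg at hdi
          have : t * d i ≤ 0 := mul_nonpos_of_nonneg_of_nonpos ht0 hdi
          have := hu i
          simp only [hu']; linarith
      · have : d i = 0 := hdsupp i hiS
        simp only [hu', this, mul_zero, sub_zero]
        exact hu i
    have hu'star : u' istar = 0 := by
      have hcan : u istar / d istar * d istar = u istar := div_mul_cancel₀ _ hdstar.ne'
      simp only [hu']
      rw [ht, htstar, hcan, sub_self]
    have hrepr : ∑ i ∈ S, u i • v i = ∑ i ∈ S, u' i • v i := by
      simp only [hu', sub_smul, Finset.sum_sub_distrib]
      have : ∑ i ∈ S, (t * d i) • v i = t • ∑ i ∈ S, d i • v i := by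
        rw [Finset.smul_sum]
        refine Finset.sum_congr rfl fun i _ => by rw [smul_smul]
      rw [this, hdsum, smul_zero, sub_zero]
    have hmem : (∑ i ∈ S, u i • v i) ∈ coneGen v (S.erase istar) := by
      refine ⟨u', hu'0, ?_⟩
      rw [hrepr]
      rw [← Finset.add_sum_erase S _ histarS, hu'star, zero_smul, zero_add]
    refine ih (S.erase istar) ?_ _ hmem
    have := Finset.card_erase_of_mem histarS
    omega

lemma isClosed_coneGen_univ (v : κ → E) : IsClosed (coneGen v Finset.univ) := by
  classical
  have hmono : ∀ T : Finset κ, coneGen v T ⊆ coneGen v Finset.univ := by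
    rintro T x ⟨u, hu, rfl⟩
    refine ⟨fun i => if i ∈ T then u i else 0, fun i => by by_cases h : i ∈ T <;> simp [h, hu i], ?_⟩
    calc ∑ i ∈ T, u i • v i = ∑ i : κ, (if i ∈ T then u i • v i else 0) := by
          rw [Finset.sum_ite_mem, Finset.univ_inter]
      _ = ∑ i : κ, (if i ∈ T then u i else 0) • v i :=
          Finset.sum_congr rfl fun i _ => by split <;> simp
  have : coneGen v Finset.univ =
      ⋃ T ∈ {T : Finset κ | LinearIndependent ℝ (fun i : T => v i)}, coneGen v T := by
    ext x
    constructor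
    · intro hx
      obtain ⟨T, hT, hxT⟩ := coneGen_caratheodory v (Finset.univ.card) Finset.univ le_rfl x hx
      exact Set.mem_biUnion hT hxT
    · intro hx
      obtain ⟨T, _, hxT⟩ := Set.mem_iUnion₂.mp hx
      exact hmono T hxT
  rw [this]
  exact Set.Finite.isClosed_biUnion (Set.toFinite _)
    (fun T hT => isClosed_coneGen_of_linInd v T hT)

/-- The finitely generated cone as a `ConvexCone`. -/
def fgCone (v : κ → E) : ConvexCone ℝ E where
  carrier := coneGen v Finset.univ
  smul_mem' := by
    rintro c hc x ⟨u, hu, rfl⟩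
    exact ⟨fun i => c * u i, fun i => mul_nonneg hc.le (hu i), by
      simp [Finset.smul_sum, smul_smul]⟩
  add_mem' := by
    rintro x ⟨u, hu, rfl⟩ y ⟨w, hw, rfl⟩
    exact ⟨u + w, fun i => add_nonneg (hu i) (hw i), by
      simp [add_smul, Finset.sum_add_distrib]⟩

lemma mem_innerDualCone_coneGen_iff (v : κ → E) (x : E) :
    x ∈ ProperCone.innerDual (coneGen v Finset.univ) ↔ ∀ i, 0 ≤ ⟪v i, x⟫_ℝ := by
  rw [ProperCone.mem_innerDual]
  constructor
  · intro hx i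
    refine hx (x := v i) ?_
    refine ⟨fun j => if j = i then 1 else 0, fun j => by positivity, ?_⟩
    simp [ite_smul]
  · rintro hx y ⟨u, hu, rfl⟩
    rw [sum_inner]
    refine Finset.sum_nonneg fun i _ => ?_
    rw [real_inner_smul_left]
    exact mul_nonneg (hu i) (hx i)

/-- Farkas' lemma, inner product form. -/
lemma farkas_inner (v : κ → E) (c : E)
    (h : ∀ x : E, (∀ i, ⟪v i, x⟫_ℝ ≤ 0) → 0 ≤ ⟪c, x⟫_ℝ) :
    ∃ u : κ → ℝ, (∀ i, 0 ≤ u i) ∧ c + ∑ i, u i • v i = 0 := by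
  classical
  set w : κ → E := fun i => -v i with hw
  by_contra hne
  let C : ProperCone ℝ E :=
    { carrier := coneGen w Finset.univ
      add_mem' := by
        rintro x y ⟨u, hu, rfl⟩ ⟨u', hu', rfl⟩
        exact ⟨u + u', fun i => add_nonneg (hu i) (hu' i), by
          simp [add_smul, Finset.sum_add_distrib]⟩
      zero_mem' := ⟨fun _ => 0, fun _ => le_rfl, by simp⟩
      smul_mem' := by
        rintro ⟨c, hc⟩ x ⟨u, hu, rfl⟩
        exact ⟨fun i => c * u i, fun i => mul_nonneg hc (hu i), by
          simp [Nonneg.mk_smul, Finset.smul_sum, smul_smul]⟩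
      isClosed' := isClosed_coneGen_univ w }
  have hcC : c ∉ C := by
    rintro ⟨u, hu, hcu⟩
    exact hne ⟨u, hu, by rw [hcu]; simp [hw, smul_neg]⟩
  obtain ⟨y, hy, hcy⟩ := ProperCone.hyperplane_separation' C hcC
  have hx' : ∀ i, ⟪v i, y⟫_ℝ ≤ 0 := by
    intro i
    have := hy (w i) ⟨fun j => if j = i then 1 else 0, fun j => by positivity, by
      simp [ite_smul]⟩
    simp only [hw, inner_neg_left] at this
    linarith
  linarith [h y hx']

lemma euc_inner {ι : Type*} [Fintype ι] (x y : EuclideanSpace ℝ ι) :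
    ⟪x, y⟫_ℝ = ∑ i, x i * y i := by
  simp [PiLp.inner_apply, RCLike.inner_apply, mul_comm]

/-- Farkas' lemma, coordinate form: if `⟨c, x⟩ ≥ 0` on the polyhedral cone
`{x : ∀ j, ⟨v j, x⟩ ≤ 0}`, then `c = -∑ u j • v j` for some `u ≥ 0`. -/
lemma farkas_dotp {ι κ : Type*} [Fintype ι] [Fintype κ] [DecidableEq κ]
    (v : κ → ι → ℝ) (c : ι → ℝ)
    (h : ∀ x : ι → ℝ, (∀ j, ∑ i, v j i * x i ≤ 0) → 0 ≤ ∑ i, c i * x i) :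
    ∃ u : κ → ℝ, (∀ j, 0 ≤ u j) ∧ ∀ i, c i + ∑ j, u j * v j i = 0 := by
  classical
  set eu : (ι → ℝ) → EuclideanSpace ℝ ι := fun y => (WithLp.equiv 2 (ι → ℝ)).symm y with heu
  have heuapp : ∀ (y : ι → ℝ) (i : ι), eu y i = y i := fun y i => rfl
  have hh : ∀ x : EuclideanSpace ℝ ι,
      (∀ j, ⟪eu (v j), x⟫_ℝ ≤ 0) → 0 ≤ ⟪eu c, x⟫_ℝ := by
    intro x hx
    rw [euc_inner]
    have : ∀ i, eu c i * x i = c i * ((WithLp.equiv 2 (ι → ℝ)) x) i := fun i => rfl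
    rw [Finset.sum_congr rfl fun i _ => this i]
    refine h _ fun j => ?_
    have hj := hx j
    rw [euc_inner] at hj
    exact hj
  obtain ⟨u, hu, hsum⟩ := farkas_inner (E := EuclideanSpace ℝ ι)
      (fun j => eu (v j)) (eu c) hh
  refine ⟨u, hu, fun i => ?_⟩
  have h1 := congrArg (fun w => w i) hsum
  have h3 : (∑ j, u j • eu (v j)) i = ∑ j, (u j • eu (v j)) i :=
    by rw [WithLp.ofLp_sum]; exact Finset.sum_apply i Finset.univ _
  have h2 : (eu c + ∑ j, u j • eu (v j)) i = c i + ∑ j, u j * v j i := by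
    calc (eu c + ∑ j, u j • eu (v j)) i
        = eu c i + (∑ j, u j • eu (v j)) i := rfl
      _ = c i + ∑ j, u j * v j i := by rw [h3]; rfl
  rw [h2] at h1
  exact h1


lemma vec_sum_single {n : ℕ} (dx : Vec n) :
    ∑ p, dx p • (Pi.single p (1:ℝ) : Vec n) = dx := by
  have h : ∀ p, dx p • (Pi.single p (1:ℝ) : Vec n) = Pi.single p (dx p) := by
    intro p
    rw [← Pi.single_smul, smul_eq_mul, mul_one]
  rw [Finset.sum_congr rfl fun p _ => h p]
  exact Finset.univ_sum_single dx

lemma clm_expand {n m : ℕ} (T : (Vec n × Vec m) →L[ℝ] ℝ) (dx : Vec n) (dy : Vec m) :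
    T (dx, dy) = ∑ p, dx p * T (Pi.single p 1, 0) + ∑ q, dy q * T (0, Pi.single q 1) := by
  have hxy : (dx, dy) = (∑ p, dx p • ((Pi.single p 1 : Vec n), (0 : Vec m)))
      + (∑ q, dy q • ((0 : Vec n), (Pi.single q 1 : Vec m))) := by
    apply Prod.ext
    · simp only [Prod.fst_add, Prod.fst_sum, Prod.smul_fst, smul_zero]
      rw [vec_sum_single]
      simp
    · simp only [Prod.snd_add, Prod.snd_sum, Prod.smul_snd, smul_zero]
      rw [vec_sum_single]
      simp
  rw [hxy, map_add, map_sum, map_sum]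
  congr 1
  · exact Finset.sum_congr rfl fun p _ => by rw [T.map_smul, smul_eq_mul]
  · exact Finset.sum_congr rfl fun q _ => by rw [T.map_smul, smul_eq_mul]

lemma dgX_expand {n m l : ℕ} (g : Vec n × Vec m → Vec l) (i : Fin l)
    (z : Vec n × Vec m) (dx : Vec n) :
    dgX g i z dx = ∑ p, dx p * dgX g i z (Pi.single p 1) := by
  unfold dgX
  rw [clm_expand (fderiv ℝ (fun p => g p i) z) dx 0]
  simp

lemma dgY_expand {n m l : ℕ} (g : Vec n × Vec m → Vec l) (i : Fin l)
    (z : Vec n × Vec m) (dy : Vec m) :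
    dgY g i z dy = ∑ q, dy q * gradYg g i z q := by
  unfold dgY gradYg
  rw [clm_expand (fderiv ℝ (fun p => g p i) z) 0 dy]
  simp

lemma jacLx_expand {n m l : ℕ} (F : Vec n × Vec m → Vec m) (g : Vec n × Vec m → Vec l)
    (zbar : Vec n × Vec m) (lam : Vec l) (dx : Vec n) (j : Fin m) :
    jacLx F g zbar lam dx j = ∑ p, dx p * jacLx F g zbar lam (Pi.single p 1) j := by
  unfold jacLx
  rw [clm_expand (fderiv ℝ (fun z => viLag F g z lam j) zbar) dx 0]
  simp

lemma jacLy_expand {n m l : ℕ} (F : Vec n × Vec m → Vec m) (g : Vec n × Vec m → Vec l)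
    (zbar : Vec n × Vec m) (lam : Vec l) (dy : Vec m) (j : Fin m) :
    jacLy F g zbar lam dy j = ∑ q, dy q * jacLy F g zbar lam (Pi.single q 1) j := by
  unfold jacLy
  rw [clm_expand (fderiv ℝ (fun z => viLag F g z lam j) zbar) 0 dy]
  simp

lemma df_expand {n m : ℕ} (f : Vec n × Vec m → ℝ) (z : Vec n × Vec m)
    (dx : Vec n) (dy : Vec m) :
    fderiv ℝ f z (dx, dy) = ∑ p, dx p * fderiv ℝ f z (Pi.single p 1, 0)
      + ∑ q, dy q * fderiv ℝ f z (0, Pi.single q 1) :=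
  clm_expand (fderiv ℝ f z) dx dy

lemma mem_tangentCone_poly {n m s : ℕ}
    (G : Matrix (Fin s) (Fin n) ℝ) (H : Matrix (Fin s) (Fin m) ℝ) (a : Vec s)
    (Z : Set (Vec n × Vec m))
    (hZ : Z = {z : Vec n × Vec m |
      ∀ r, Matrix.mulVec G z.1 r + Matrix.mulVec H z.2 r + a r ≤ 0})
    (zbar : Vec n × Vec m) (hz : zbar ∈ Z) (d : Vec n × Vec m)
    (hd : ∀ r, Matrix.mulVec G zbar.1 r + Matrix.mulVec H zbar.2 r + a r = 0 →
      Matrix.mulVec G d.1 r + Matrix.mulVec H d.2 r ≤ 0) :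
    d ∈ tangentCone Z zbar := by
  classical
  rw [hZ] at hz
  -- per-row bound on the step size
  have hrow : ∀ r : Fin s, ∃ tr : ℝ, 0 < tr ∧ ∀ t : ℝ, 0 < t → t ≤ tr →
      Matrix.mulVec G (zbar.1 + t • d.1) r + Matrix.mulVec H (zbar.2 + t • d.2) r + a r ≤ 0 := by
    intro r
    set L : ℝ := Matrix.mulVec G d.1 r + Matrix.mulVec H d.2 r with hL
    set cc : ℝ := Matrix.mulVec G zbar.1 r + Matrix.mulVec H zbar.2 r + a r with hcc
    have hval : ∀ t : ℝ, Matrix.mulVec G (zbar.1 + t • d.1) r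
        + Matrix.mulVec H (zbar.2 + t • d.2) r + a r = cc + t * L := by
      intro t
      simp only [Matrix.mulVec_add, Matrix.mulVec_smul, Pi.add_apply, Pi.smul_apply,
        smul_eq_mul, hL, hcc]
      ring
    have hcc0 : cc ≤ 0 := hz r
    by_cases hLpos : L ≤ 0
    · refine ⟨1, one_pos, fun t ht _ => ?_⟩
      rw [hval]
      nlinarith
    · push_neg at hLpos
      have hccneg : cc < 0 := by
        rcases lt_or_eq_of_le hcc0 with h1 | h1
        · exact h1
        · exact absurd (hd r (by rw [← hcc]; exact h1)) (not_le.mpr hLpos)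
      refine ⟨-cc / L, div_pos (by linarith) hLpos, fun t ht htle => ?_⟩
      rw [hval]
      have := (le_div_iff₀ hLpos).mp htle
      linarith
  choose tr htr0 htr using hrow
  set TS : Finset ℝ := insert (1:ℝ) (Finset.image tr Finset.univ) with hTS
  have hTSne : TS.Nonempty := ⟨1, Finset.mem_insert_self _ _⟩
  set t₀ : ℝ := TS.min' hTSne with ht₀
  have ht₀pos : 0 < t₀ := by
    have hmem := TS.min'_mem hTSne
    rw [← ht₀] at hmem
    rw [hTS] at hmem
    rcases Finset.mem_insert.mp hmem with h1 | h1
    · rw [h1]; exact one_pos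
    · obtain ⟨r, _, hr⟩ := Finset.mem_image.mp h1
      rw [← hr]; exact htr0 r
  have ht₀le : ∀ r, t₀ ≤ tr r := fun r =>
    Finset.min'_le _ _ (Finset.mem_insert_of_mem (Finset.mem_image_of_mem tr (Finset.mem_univ r)))
  refine ⟨fun k => zbar + (t₀ / (k + 1)) • d, fun k => t₀ / (k + 1), ?_, ?_, ?_, ?_, ?_⟩
  · intro k
    rw [hZ]
    intro r
    have htk0 : 0 < t₀ / ((k : ℝ) + 1) := by positivity
    have htkle : t₀ / ((k : ℝ) + 1) ≤ tr r := by
      have h1 : t₀ / ((k : ℝ) + 1) ≤ t₀ := by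
        apply div_le_self ht₀pos.le
        have : (0:ℝ) ≤ (k : ℝ) := Nat.cast_nonneg k
        linarith
      exact h1.trans (ht₀le r)
    have := htr r _ htk0 htkle
    simpa using this
  · have h1 : Tendsto (fun k : ℕ => t₀ / (k + 1)) atTop (𝓝 0) := by
      have := tendsto_one_div_add_atTop_nhds_zero_nat (𝕜 := ℝ)
      have h2 := this.const_mul t₀
      rw [mul_zero] at h2
      convert h2 using 2 with k
      rw [div_eq_mul_one_div]
    have h2 : Tendsto (fun k : ℕ => (t₀ / (k + 1)) • d) atTop (𝓝 0) := by
      have := h1.smul_const d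
      rwa [zero_smul] at this
    have h3 := h2.const_add zbar
    rwa [add_zero] at h3
  · intro k; positivity
  · have := tendsto_one_div_add_atTop_nhds_zero_nat (𝕜 := ℝ)
    have h2 := this.const_mul t₀
    rw [mul_zero] at h2
    convert h2 using 2 with k
    rw [div_eq_mul_one_div]
  · have : ∀ k : ℕ, (t₀ / (k + 1) : ℝ)⁻¹ • (zbar + (t₀ / (k + 1)) • d - zbar) = d := by
      intro k
      have htk0 : (t₀ / ((k:ℝ) + 1)) ≠ 0 := by positivity
      rw [add_sub_cancel_left, smul_smul, inv_mul_cancel₀ htk0, one_smul]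
    rw [funext this]
    exact tendsto_const_nhds

lemma tangentCone_poly_rows {n m s : ℕ}
    (G : Matrix (Fin s) (Fin n) ℝ) (H : Matrix (Fin s) (Fin m) ℝ) (a : Vec s)
    (Z : Set (Vec n × Vec m))
    (hZ : Z = {z : Vec n × Vec m |
      ∀ r, Matrix.mulVec G z.1 r + Matrix.mulVec H z.2 r + a r ≤ 0})
    (zbar : Vec n × Vec m) (d : Vec n × Vec m) (hdT : d ∈ tangentCone Z zbar)
    (r : Fin s) (hr : Matrix.mulVec G zbar.1 r + Matrix.mulVec H zbar.2 r + a r = 0) :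
    Matrix.mulVec G d.1 r + Matrix.mulVec H d.2 r ≤ 0 := by
  obtain ⟨zs, ts, hzs, _, hts0, _, hconv⟩ := hdT
  set φ : (Vec n × Vec m) → ℝ := fun z => Matrix.mulVec G z.1 r + Matrix.mulVec H z.2 r with hφ
  have hφcont : Continuous φ := by
    apply Continuous.add
    · simp only [Matrix.mulVec, dotProduct]
      exact continuous_finset_sum _ fun p _ =>
        (continuous_const.mul ((continuous_apply p).comp continuous_fst))
    · simp only [Matrix.mulVec, dotProduct]
      exact continuous_finset_sum _ fun q _ =>
        (continuous_const.mul ((continuous_apply q).comp continuous_snd))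
  have hφlin : ∀ (k : ℕ), φ ((ts k)⁻¹ • (zs k - zbar)) = (ts k)⁻¹ * (φ (zs k) - φ zbar) := by
    intro k
    simp only [hφ, Prod.smul_fst, Prod.smul_snd, Prod.fst_sub, Prod.snd_sub,
      Matrix.mulVec_smul, Matrix.mulVec_sub, Pi.smul_apply, Pi.sub_apply, smul_eq_mul]
    ring
  have hval : ∀ k, φ ((ts k)⁻¹ • (zs k - zbar)) ≤ 0 := by
    intro k
    rw [hφlin k]
    have h1 : φ (zs k) + a r ≤ 0 := by
      have := hzs k
      rw [hZ] at this
      exact this r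
    have h2 : φ zbar = -a r := by
      simp only [hφ]; linarith [hr]
    apply mul_nonpos_of_nonneg_of_nonpos (inv_nonneg.mpr (hts0 k).le)
    rw [h2]; linarith
  have hlim : Tendsto (fun k => φ ((ts k)⁻¹ • (zs k - zbar))) atTop (𝓝 (φ d)) :=
    (hφcont.tendsto d).comp hconv
  exact le_of_tendsto hlim (Filter.Eventually.of_forall hval)


lemma sum_mul_sum_comm {α β : Type*} [Fintype α] [Fintype β]
    (A : α → ℝ) (B : β → ℝ) (X : α → β → ℝ) :
    ∑ p, A p * ∑ j, B j * X p j = ∑ j, B j * ∑ p, A p * X p j := by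
  calc ∑ p, A p * ∑ j, B j * X p j = ∑ p, ∑ j, A p * (B j * X p j) := by
        exact Finset.sum_congr rfl fun p _ => Finset.mul_sum _ _ _
    _ = ∑ j, ∑ p, A p * (B j * X p j) := Finset.sum_comm
    _ = ∑ j, B j * ∑ p, A p * X p j := by
        refine Finset.sum_congr rfl fun j _ => ?_
        rw [Finset.mul_sum]
        exact Finset.sum_congr rfl fun p _ => by ring

lemma dgY_add_smul {n m l : ℕ} (g : Vec n × Vec m → Vec l) (i : Fin l)
    (z : Vec n × Vec m) (dy pp : Vec m) (t : ℝ) :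
    dgY g i z (dy + t • pp) = dgY g i z dy + t * dgY g i z pp := by
  rw [dgY_expand, dgY_expand, dgY_expand]
  rw [Finset.mul_sum, ← Finset.sum_add_distrib]
  refine Finset.sum_congr rfl fun q _ => ?_
  have : (dy + t • pp) q = dy q + t * pp q := rfl
  rw [this]; ring

lemma reverse_dir {n m l s : ℕ}
    (f : Vec n × Vec m → ℝ)
    (F : Vec n × Vec m → Vec m) (g : Vec n × Vec m → Vec l)
    (G : Matrix (Fin s) (Fin n) ℝ) (H : Matrix (Fin s) (Fin m) ℝ) (a : Vec s)
    (Z : Set (Vec n × Vec m))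
    (hZ : Z = {z : Vec n × Vec m |
      ∀ r, Matrix.mulVec G z.1 r + Matrix.mulVec H z.2 r + a r ≤ 0})
    (zbar : Vec n × Vec m) (hzbar : zbar ∈ feasSet F g Z)
    (hfullCQ : tangentCone (feasSet F g Z) zbar = mpecLinCone F g Z zbar)
    (hdual : ∀ lam ∈ multSet F g zbar, ∀ al abar : Set (Fin l),
      al ∪ abar = {i | g zbar i = 0 ∧ lam i = 0} → al ∩ abar = ∅ →
      ∃ (ζ : Vec s) (η : Vec l) (π : Vec m),
        (∀ p : Fin n,
          fderiv ℝ f zbar (Pi.single p 1, 0) + (∑ r, G r p * ζ r) +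
            (∑ i, η i * dgX g i zbar (Pi.single p 1)) =
          ∑ j, π j * jacLx F g zbar lam (Pi.single p 1) j) ∧
        (∀ q : Fin m,
          fderiv ℝ f zbar (0, Pi.single q 1) + (∑ r, H r q * ζ r) +
            (∑ i, η i * dgY g i zbar (Pi.single q 1)) =
          ∑ j, π j * jacLy F g zbar lam (Pi.single q 1) j) ∧
        (∀ i ∈ al, dgY g i zbar π ≤ 0) ∧
        (∀ i, g zbar i = 0 → 0 < lam i → dgY g i zbar π = 0) ∧
        (∀ i ∈ abar, 0 ≤ η i) ∧
        (∀ i, g zbar i ≠ 0 → η i = 0) ∧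
        (∀ r, 0 ≤ ζ r) ∧
        (∑ r, ζ r * (Matrix.mulVec G zbar.1 r + Matrix.mulVec H zbar.2 r + a r) = 0)) :
    ∀ dz ∈ tangentCone (feasSet F g Z) zbar, 0 ≤ fderiv ℝ f zbar dz := by
  classical
  intro dz hdz
  rw [hfullCQ] at hdz
  obtain ⟨htZ, hU⟩ := hdz
  obtain ⟨lam, hlam, hAVI0⟩ := Set.mem_iUnion₂.mp hU
  have hAVI : solvesAVI F g zbar lam dz.1 dz.2 := hAVI0
  obtain ⟨hdir, hineq⟩ := hAVI
  have hdirlift : (dz.1, dz.2) ∈ liftedCone g zbar lam := hdir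
  set al : Set (Fin l) := {i | g zbar i = 0 ∧ lam i = 0 ∧
    dgX g i zbar dz.1 + dgY g i zbar dz.2 = 0} with hal
  set abar : Set (Fin l) := {i | g zbar i = 0 ∧ lam i = 0 ∧
    dgX g i zbar dz.1 + dgY g i zbar dz.2 ≠ 0} with habar
  have hu : al ∪ abar = {i | g zbar i = 0 ∧ lam i = 0} := by
    ext i
    simp only [hal, habar, Set.mem_union, Set.mem_setOf_eq]
    tauto
  have hdis : al ∩ abar = ∅ := by
    ext i
    simp only [hal, habar, Set.mem_inter_iff, Set.mem_setOf_eq, Set.mem_empty_iff_false,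
      iff_false, not_and]
    tauto
  obtain ⟨ζ, η, π, e1, e2, hπal, hπplus, hηabar, hη0, hζ0, hζcomp⟩ :=
    hdual lam hlam al abar hu hdis
  set TA : ℝ := ∑ j, π j * (jacLx F g zbar lam dz.1 j + jacLy F g zbar lam dz.2 j) with hTA
  set TB : ℝ := ∑ r, ζ r * (Matrix.mulVec G dz.1 r + Matrix.mulVec H dz.2 r) with hTB
  set TC : ℝ := ∑ i, η i * (dgX g i zbar dz.1 + dgY g i zbar dz.2) with hTC
  have hdf : fderiv ℝ f zbar dz = TA - TB - TC := by
    have h0 := df_expand f zbar dz.1 dz.2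
    rw [Prod.mk.eta] at h0
    have h1 : ∑ p, dz.1 p * fderiv ℝ f zbar (Pi.single p 1, 0)
        = ∑ p, dz.1 p * ((∑ j, π j * jacLx F g zbar lam (Pi.single p 1) j)
          - (∑ r, G r p * ζ r) - (∑ i, η i * dgX g i zbar (Pi.single p 1))) := by
      refine Finset.sum_congr rfl fun p _ => ?_
      have h2 : fderiv ℝ f zbar (Pi.single p 1, 0)
          = (∑ j, π j * jacLx F g zbar lam (Pi.single p 1) j)
            - (∑ r, G r p * ζ r) - (∑ i, η i * dgX g i zbar (Pi.single p 1)) := by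
        linarith [e1 p]
      rw [h2]
    have h1' : ∑ q, dz.2 q * fderiv ℝ f zbar (0, Pi.single q 1)
        = ∑ q, dz.2 q * ((∑ j, π j * jacLy F g zbar lam (Pi.single q 1) j)
          - (∑ r, H r q * ζ r) - (∑ i, η i * dgY g i zbar (Pi.single q 1))) := by
      refine Finset.sum_congr rfl fun q _ => ?_
      have h2 : fderiv ℝ f zbar (0, Pi.single q 1)
          = (∑ j, π j * jacLy F g zbar lam (Pi.single q 1) j)
            - (∑ r, H r q * ζ r) - (∑ i, η i * dgY g i zbar (Pi.single q 1)) := by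
        linarith [e2 q]
      rw [h2]
    have hx1 : ∑ p, dz.1 p * ∑ j, π j * jacLx F g zbar lam (Pi.single p 1) j
        = ∑ j, π j * jacLx F g zbar lam dz.1 j := by
      rw [sum_mul_sum_comm]
      exact Finset.sum_congr rfl fun j _ => by rw [← jacLx_expand]
    have hy1 : ∑ q, dz.2 q * ∑ j, π j * jacLy F g zbar lam (Pi.single q 1) j
        = ∑ j, π j * jacLy F g zbar lam dz.2 j := by
      rw [sum_mul_sum_comm]
      exact Finset.sum_congr rfl fun j _ => by rw [← jacLy_expand]
    have hx2 : ∑ p, dz.1 p * ∑ r, G r p * ζ r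
        = ∑ r, ζ r * Matrix.mulVec G dz.1 r := by
      have hcomm := sum_mul_sum_comm (fun p => dz.1 p) (fun r => ζ r) (fun p r => G r p)
      calc ∑ p, dz.1 p * ∑ r, G r p * ζ r
          = ∑ p, dz.1 p * ∑ r, ζ r * G r p := by
            exact Finset.sum_congr rfl fun p _ =>
              congrArg (dz.1 p * ·) (Finset.sum_congr rfl fun r _ => mul_comm (G r p) (ζ r))
        _ = ∑ r, ζ r * ∑ p, dz.1 p * G r p := hcomm
        _ = ∑ r, ζ r * Matrix.mulVec G dz.1 r := by
            refine Finset.sum_congr rfl fun r _ => ?_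
            congr 1
            simp only [Matrix.mulVec, dotProduct]
            exact Finset.sum_congr rfl fun p _ => mul_comm (dz.1 p) (G r p)
    have hy2 : ∑ q, dz.2 q * ∑ r, H r q * ζ r
        = ∑ r, ζ r * Matrix.mulVec H dz.2 r := by
      have hcomm := sum_mul_sum_comm (fun q => dz.2 q) (fun r => ζ r) (fun q r => H r q)
      calc ∑ q, dz.2 q * ∑ r, H r q * ζ r
          = ∑ q, dz.2 q * ∑ r, ζ r * H r q := by
            exact Finset.sum_congr rfl fun q _ =>
              congrArg (dz.2 q * ·) (Finset.sum_congr rfl fun r _ => mul_comm (H r q) (ζ r))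
        _ = ∑ r, ζ r * ∑ q, dz.2 q * H r q := hcomm
        _ = ∑ r, ζ r * Matrix.mulVec H dz.2 r := by
            refine Finset.sum_congr rfl fun r _ => ?_
            congr 1
            simp only [Matrix.mulVec, dotProduct]
            exact Finset.sum_congr rfl fun q _ => mul_comm (dz.2 q) (H r q)
    have hx3 : ∑ p, dz.1 p * ∑ i, η i * dgX g i zbar (Pi.single p 1)
        = ∑ i, η i * dgX g i zbar dz.1 := by
      rw [sum_mul_sum_comm]
      exact Finset.sum_congr rfl fun i _ => by rw [← dgX_expand]
    have hy3 : ∑ q, dz.2 q * ∑ i, η i * dgY g i zbar (Pi.single q 1)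
        = ∑ i, η i * dgY g i zbar dz.2 := by
      rw [sum_mul_sum_comm]
      refine Finset.sum_congr rfl fun i _ => ?_
      congr 1
      rw [dgY_expand]
      exact Finset.sum_congr rfl fun q _ => rfl
    have hTAsplit : TA = (∑ j, π j * jacLx F g zbar lam dz.1 j)
        + ∑ j, π j * jacLy F g zbar lam dz.2 j := by
      rw [hTA, ← Finset.sum_add_distrib]
      exact Finset.sum_congr rfl fun j _ => by ring
    have hTBsplit : TB = (∑ r, ζ r * Matrix.mulVec G dz.1 r)
        + ∑ r, ζ r * Matrix.mulVec H dz.2 r := by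
      rw [hTB, ← Finset.sum_add_distrib]
      exact Finset.sum_congr rfl fun r _ => by ring
    have hTCsplit : TC = (∑ i, η i * dgX g i zbar dz.1)
        + ∑ i, η i * dgY g i zbar dz.2 := by
      rw [hTC, ← Finset.sum_add_distrib]
      exact Finset.sum_congr rfl fun i _ => by ring
    rw [h0, h1, h1']
    simp only [mul_sub]
    rw [Finset.sum_sub_distrib, Finset.sum_sub_distrib, Finset.sum_sub_distrib,
      Finset.sum_sub_distrib]
    rw [hx1, hy1, hx2, hy2, hx3, hy3, hTAsplit, hTBsplit, hTCsplit]
    ring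
  -- TB ≤ 0
  have hccle : ∀ r, Matrix.mulVec G zbar.1 r + Matrix.mulVec H zbar.2 r + a r ≤ 0 := by
    have := hzbar.1
    rw [hZ] at this
    exact this
  have hterm0 : ∀ r ∈ Finset.univ,
      ζ r * (Matrix.mulVec G zbar.1 r + Matrix.mulVec H zbar.2 r + a r) = 0 := by
    rw [← Finset.sum_eq_zero_iff_of_nonpos]
    · exact hζcomp
    · intro r _
      exact mul_nonpos_of_nonneg_of_nonpos (hζ0 r) (hccle r)
  have hB : TB ≤ 0 := by
    rw [hTB]
    refine Finset.sum_nonpos fun r _ => ?_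
    rcases (hζ0 r).eq_or_lt with hz0 | hzpos
    · rw [← hz0, zero_mul]
    · have h1 := hterm0 r (Finset.mem_univ r)
      have h2 : Matrix.mulVec G zbar.1 r + Matrix.mulVec H zbar.2 r + a r = 0 := by
        rcases mul_eq_zero.mp h1 with h | h
        · exact absurd h.symm hzpos.ne
        · exact h
      have h3 := tangentCone_poly_rows G H a Z hZ zbar dz htZ r h2
      exact mul_nonpos_of_nonneg_of_nonpos (hζ0 r) h3
  -- TC ≤ 0
  have hC : TC ≤ 0 := by
    rw [hTC]
    refine Finset.sum_nonpos fun i _ => ?_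
    by_cases hgi : g zbar i = 0
    · rcases ((hlam.1 i).eq_or_lt) with hl0 | hlpos
      · have hle : dgX g i zbar dz.1 + dgY g i zbar dz.2 ≤ 0 :=
          (hdirlift i hgi).1 hl0.symm
        by_cases hdg : dgX g i zbar dz.1 + dgY g i zbar dz.2 = 0
        · rw [hdg, mul_zero]
        · have hmem : i ∈ abar := by
            rw [habar]
            exact ⟨hgi, hl0.symm, hdg⟩
          exact mul_nonpos_of_nonneg_of_nonpos (hηabar i hmem) hle
      · have hdg : dgX g i zbar dz.1 + dgY g i zbar dz.2 = 0 :=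
          (hdirlift i hgi).2 hlpos
        rw [hdg, mul_zero]
    · rw [hη0 i hgi, zero_mul]
  -- TA ≥ 0
  have hA : 0 ≤ TA := by
    -- step size for the test vector dy + t₀ • π
    have hbnd : ∀ i : Fin l, ∃ tb : ℝ, 0 < tb ∧ ∀ t : ℝ, 0 < t → t ≤ tb →
        (g zbar i = 0 → lam i = 0 →
          dgX g i zbar dz.1 + (dgY g i zbar dz.2 + t * dgY g i zbar π) ≤ 0) := by
      intro i
      by_cases hgi : g zbar i = 0
      · by_cases hl0 : lam i = 0
        · have hle : dgX g i zbar dz.1 + dgY g i zbar dz.2 ≤ 0 :=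
            (hdirlift i hgi).1 hl0
          by_cases hdg : dgX g i zbar dz.1 + dgY g i zbar dz.2 = 0
          · have hmem : i ∈ al := by rw [hal]; exact ⟨hgi, hl0, hdg⟩
            have hπle := hπal i hmem
            exact ⟨1, one_pos, fun t ht _ _ _ => by nlinarith⟩
          · have hlt : dgX g i zbar dz.1 + dgY g i zbar dz.2 < 0 :=
              lt_of_le_of_ne hle hdg
            by_cases hπpos : 0 < dgY g i zbar π
            · refine ⟨-(dgX g i zbar dz.1 + dgY g i zbar dz.2) / dgY g i zbar π,
                div_pos (by linarith) hπpos, fun t ht htle _ _ => ?_⟩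
              have := (le_div_iff₀ hπpos).mp htle
              linarith
            · push_neg at hπpos
              refine ⟨1, one_pos, fun t ht _ _ _ => ?_⟩
              nlinarith
        · exact ⟨1, one_pos, fun t ht _ _ h => absurd h hl0⟩
      · exact ⟨1, one_pos, fun t ht _ h => absurd h hgi⟩
    choose tb htb0 htb using hbnd
    set TS : Finset ℝ := insert (1:ℝ) (Finset.image tb Finset.univ) with hTS
    have hTSne : TS.Nonempty := ⟨1, Finset.mem_insert_self _ _⟩
    set t₀ : ℝ := TS.min' hTSne with ht₀
    have ht₀pos : 0 < t₀ := by
      have hmem := TS.min'_mem hTSne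
      rw [← ht₀] at hmem
      rw [hTS] at hmem
      rcases Finset.mem_insert.mp hmem with h1 | h1
      · rw [h1]; exact one_pos
      · obtain ⟨i, _, hi⟩ := Finset.mem_image.mp h1
        rw [← hi]; exact htb0 i
    have ht₀le : ∀ i, t₀ ≤ tb i := fun i =>
      Finset.min'_le _ _ (Finset.mem_insert_of_mem (Finset.mem_image_of_mem tb (Finset.mem_univ i)))
    have hv : (dz.2 + t₀ • π) ∈ dirCrit g zbar lam dz.1 := by
      intro i hgi
      constructor
      · intro hl0
        rw [dgY_add_smul]
        exact htb i t₀ ht₀pos (ht₀le i) hgi hl0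
      · intro hlpos
        rw [dgY_add_smul]
        have h1 : dgX g i zbar dz.1 + dgY g i zbar dz.2 = 0 :=
          (hdirlift i hgi).2 hlpos
        have h2 : dgY g i zbar π = 0 := hπplus i hgi hlpos
        rw [h2]
        linarith
    have hstep := hineq (dz.2 + t₀ • π) hv
    have hsimp : dz.2 + t₀ • π - dz.2 = t₀ • π := by
      rw [add_sub_cancel_left]
    rw [hsimp] at hstep
    have hdot : dotp (jacLx F g zbar lam dz.1 + jacLy F g zbar lam dz.2) (t₀ • π)
        = t₀ * ∑ j, π j * (jacLx F g zbar lam dz.1 j + jacLy F g zbar lam dz.2 j) := by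
      unfold dotp
      rw [Finset.mul_sum]
      refine Finset.sum_congr rfl fun j _ => ?_
      have h1 : (t₀ • π) j = t₀ * π j := rfl
      have h2 : (jacLx F g zbar lam dz.1 + jacLy F g zbar lam dz.2) j
          = jacLx F g zbar lam dz.1 j + jacLy F g zbar lam dz.2 j := rfl
      rw [h1, h2]; ring
    rw [hdot] at hstep
    rw [hTA]
    by_contra hneg
    push_neg at hneg
    nlinarith
  linarith [hdf, hA, hB, hC]


/-- Concatenated coordinate functions on a 3-block index type. -/
def dsum3 {n m l : ℕ} (A : Fin n → ℝ) (B : Fin m → ℝ) (C : Fin l → ℝ) :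
    (Fin n ⊕ (Fin m ⊕ Fin l)) → ℝ :=
  Sum.elim A (Sum.elim B C)

lemma dsum3_dot {n m l : ℕ} (A : Fin n → ℝ) (B : Fin m → ℝ) (C : Fin l → ℝ)
    (x : (Fin n ⊕ (Fin m ⊕ Fin l)) → ℝ) :
    ∑ t, dsum3 A B C t * x t
      = ∑ p, A p * x (Sum.inl p) + (∑ q, B q * x (Sum.inr (Sum.inl q))
        + ∑ i, C i * x (Sum.inr (Sum.inr i))) := by
  rw [Fintype.sum_sum_type, Fintype.sum_sum_type]
  rfl

lemma forward_dir {n m l s : ℕ}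
    (f : Vec n × Vec m → ℝ)
    (F : Vec n × Vec m → Vec m) (g : Vec n × Vec m → Vec l)
    (G : Matrix (Fin s) (Fin n) ℝ) (H : Matrix (Fin s) (Fin m) ℝ) (a : Vec s)
    (Z : Set (Vec n × Vec m))
    (hZ : Z = {z : Vec n × Vec m |
      ∀ r, Matrix.mulVec G z.1 r + Matrix.mulVec H z.2 r + a r ≤ 0})
    (zbar : Vec n × Vec m) (hzbar : zbar ∈ feasSet F g Z)
    (hfullCQ : tangentCone (feasSet F g Z) zbar = mpecLinCone F g Z zbar)
    (hstat : ∀ dz ∈ tangentCone (feasSet F g Z) zbar, 0 ≤ fderiv ℝ f zbar dz)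
    (lam : Vec l) (hlam : lam ∈ multSet F g zbar) (al abar : Set (Fin l))
    (hu : al ∪ abar = {i | g zbar i = 0 ∧ lam i = 0}) (hdis : al ∩ abar = ∅) :
    ∃ (ζ : Vec s) (η : Vec l) (π : Vec m),
        (∀ p : Fin n,
          fderiv ℝ f zbar (Pi.single p 1, 0) + (∑ r, G r p * ζ r) +
            (∑ i, η i * dgX g i zbar (Pi.single p 1)) =
          ∑ j, π j * jacLx F g zbar lam (Pi.single p 1) j) ∧
        (∀ q : Fin m,
          fderiv ℝ f zbar (0, Pi.single q 1) + (∑ r, H r q * ζ r) +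
            (∑ i, η i * dgY g i zbar (Pi.single q 1)) =
          ∑ j, π j * jacLy F g zbar lam (Pi.single q 1) j) ∧
        (∀ i ∈ al, dgY g i zbar π ≤ 0) ∧
        (∀ i, g zbar i = 0 → 0 < lam i → dgY g i zbar π = 0) ∧
        (∀ i ∈ abar, 0 ≤ η i) ∧
        (∀ i, g zbar i ≠ 0 → η i = 0) ∧
        (∀ r, 0 ≤ ζ r) ∧
        (∑ r, ζ r * (Matrix.mulVec G zbar.1 r + Matrix.mulVec H zbar.2 r + a r) = 0) := by
  classical
  have halsub : ∀ i ∈ al, g zbar i = 0 ∧ lam i = 0 := by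
    intro i hi
    have h1 : i ∈ al ∪ abar := Or.inl hi
    rw [hu] at h1
    exact h1
  have habarsub : ∀ i ∈ abar, g zbar i = 0 ∧ lam i = 0 := by
    intro i hi
    have h1 : i ∈ al ∪ abar := Or.inr hi
    rw [hu] at h1
    exact h1
  set T : Set (Fin l) := {i | i ∈ al ∨ (g zbar i = 0 ∧ 0 < lam i)} with hTdef
  -- the rows of the Farkas system
  set rowZ : Fin s → (Fin n ⊕ (Fin m ⊕ Fin l)) → ℝ := fun r =>
    dsum3 (fun p => G r p) (fun q => H r q) (fun _ => 0) with hrowZ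
  set rowg : Fin l → (Fin n ⊕ (Fin m ⊕ Fin l)) → ℝ := fun i =>
    dsum3 (fun p => dgX g i zbar (Pi.single p 1)) (fun q => dgY g i zbar (Pi.single q 1))
      (fun _ => 0) with hrowg
  set rowgneg : Fin l → (Fin n ⊕ (Fin m ⊕ Fin l)) → ℝ := fun i =>
    dsum3 (fun p => -dgX g i zbar (Pi.single p 1)) (fun q => -dgY g i zbar (Pi.single q 1))
      (fun _ => 0) with hrowgneg
  set rowE : Fin m → (Fin n ⊕ (Fin m ⊕ Fin l)) → ℝ := fun j =>
    dsum3 (fun p => jacLx F g zbar lam (Pi.single p 1) j)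
      (fun q => jacLy F g zbar lam (Pi.single q 1) j)
      (fun i => if i ∈ T then gradYg g i zbar j else 0) with hrowE
  set rowEneg : Fin m → (Fin n ⊕ (Fin m ⊕ Fin l)) → ℝ := fun j =>
    dsum3 (fun p => -jacLx F g zbar lam (Pi.single p 1) j)
      (fun q => -jacLy F g zbar lam (Pi.single q 1) j)
      (fun i => if i ∈ T then -gradYg g i zbar j else 0) with hrowEneg
  set rowM : Fin l → (Fin n ⊕ (Fin m ⊕ Fin l)) → ℝ := fun i =>
    dsum3 (fun _ => 0) (fun _ => 0) (fun i' => if i' = i then (-1:ℝ) else 0) with hrowM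
  set v : (Fin s ⊕ (Fin l ⊕ (Fin l ⊕ (Fin l ⊕ (Fin m ⊕ (Fin m ⊕ Fin l)))))) →
      (Fin n ⊕ (Fin m ⊕ Fin l)) → ℝ :=
    Sum.elim (fun r => if Matrix.mulVec G zbar.1 r + Matrix.mulVec H zbar.2 r + a r = 0
        then rowZ r else 0)
      (Sum.elim (fun i => if i ∈ abar then rowg i else 0)
        (Sum.elim (fun i => if i ∈ T then rowg i else 0)
          (Sum.elim (fun i => if i ∈ T then rowgneg i else 0)
            (Sum.elim rowE (Sum.elim rowEneg (fun i => if i ∈ al then rowM i else 0)))))) with hv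
  set c : (Fin n ⊕ (Fin m ⊕ Fin l)) → ℝ :=
    dsum3 (fun p => fderiv ℝ f zbar (Pi.single p 1, 0))
      (fun q => fderiv ℝ f zbar (0, Pi.single q 1)) (fun _ => 0) with hc
  -- the Farkas hypothesis
  have hfar : ∀ x : (Fin n ⊕ (Fin m ⊕ Fin l)) → ℝ,
      (∀ j, ∑ t, v j t * x t ≤ 0) → 0 ≤ ∑ t, c t * x t := by
    intro x hx
    set dx : Vec n := fun p => x (Sum.inl p) with hdx
    set dy : Vec m := fun q => x (Sum.inr (Sum.inl q)) with hdy
    set mu : Vec l := fun i => x (Sum.inr (Sum.inr i)) with hmu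
    -- decode the constraints
    have hrowgdot : ∀ i : Fin l, ∑ t, rowg i t * x t
        = dgX g i zbar dx + dgY g i zbar dy := by
      intro i
      rw [hrowg]
      rw [dsum3_dot]
      simp only [zero_mul, Finset.sum_const_zero, add_zero]
      rw [dgX_expand g i zbar dx, dgY_expand g i zbar dy]
      congr 1
      · exact Finset.sum_congr rfl fun p _ => mul_comm _ _
      · have : ∀ q, dgY g i zbar (Pi.single q 1) = gradYg g i zbar q := fun q => rfl
        exact Finset.sum_congr rfl fun q _ => by rw [this]; exact mul_comm _ _
    have hZrow : ∀ r, Matrix.mulVec G zbar.1 r + Matrix.mulVec H zbar.2 r + a r = 0 →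
        Matrix.mulVec G dx r + Matrix.mulVec H dy r ≤ 0 := by
      intro r hr
      have h1 := hx (Sum.inl r)
      rw [hv] at h1
      simp only [Sum.elim_inl, if_pos hr] at h1
      rw [hrowZ, dsum3_dot] at h1
      simp only [zero_mul, Finset.sum_const_zero, add_zero] at h1
      have h2 : Matrix.mulVec G dx r = ∑ p, G r p * x (Sum.inl p) := by
        simp only [Matrix.mulVec, dotProduct, hdx]
      have h3 : Matrix.mulVec H dy r = ∑ q, H r q * x (Sum.inr (Sum.inl q)) := by
        simp only [Matrix.mulVec, dotProduct, hdy]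
      rw [h2, h3]
      linarith
    have habarrow : ∀ i ∈ abar, dgX g i zbar dx + dgY g i zbar dy ≤ 0 := by
      intro i hi
      have h1 := hx (Sum.inr (Sum.inl i))
      rw [hv] at h1
      simp only [Sum.elim_inl, Sum.elim_inr, if_pos hi] at h1
      rw [hrowgdot i] at h1
      exact h1
    have hTrow : ∀ i ∈ T, dgX g i zbar dx + dgY g i zbar dy = 0 := by
      intro i hi
      have h1 := hx (Sum.inr (Sum.inr (Sum.inl i)))
      have h2 := hx (Sum.inr (Sum.inr (Sum.inr (Sum.inl i))))
      rw [hv] at h1 h2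
      simp only [Sum.elim_inl, Sum.elim_inr, if_pos hi] at h1 h2
      rw [hrowgdot i] at h1
      have h3 : ∑ t, rowgneg i t * x t = -(dgX g i zbar dx + dgY g i zbar dy) := by
        rw [hrowgneg, dsum3_dot]
        simp only [zero_mul, Finset.sum_const_zero, add_zero, neg_mul,
          Finset.sum_neg_distrib]
        have h4 := hrowgdot i
        rw [hrowg, dsum3_dot] at h4
        simp only [zero_mul, Finset.sum_const_zero, add_zero] at h4
        linarith
      rw [h3] at h2
      linarith
    have hErow : ∀ j, jacLx F g zbar lam dx j + jacLy F g zbar lam dy j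
        + ∑ i, (if i ∈ T then gradYg g i zbar j else 0) * mu i = 0 := by
      intro j
      have h1 := hx (Sum.inr (Sum.inr (Sum.inr (Sum.inr (Sum.inl j)))))
      have h2 := hx (Sum.inr (Sum.inr (Sum.inr (Sum.inr (Sum.inr (Sum.inl j))))))
      rw [hv] at h1 h2
      simp only [Sum.elim_inl, Sum.elim_inr] at h1 h2
      rw [hrowE, dsum3_dot] at h1
      rw [hrowEneg, dsum3_dot] at h2
      have hjx : ∑ p, jacLx F g zbar lam (Pi.single p 1) j * x (Sum.inl p)
          = jacLx F g zbar lam dx j := by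
        rw [jacLx_expand F g zbar lam dx j]
        exact Finset.sum_congr rfl fun p _ => mul_comm _ _
      have hjy : ∑ q, jacLy F g zbar lam (Pi.single q 1) j * x (Sum.inr (Sum.inl q))
          = jacLy F g zbar lam dy j := by
        rw [jacLy_expand F g zbar lam dy j]
        exact Finset.sum_congr rfl fun q _ => mul_comm _ _
      have hneg : ∀ w : Fin l, (if w ∈ T then -gradYg g w zbar j else 0) * x (Sum.inr (Sum.inr w))
          = -((if w ∈ T then gradYg g w zbar j else 0) * x (Sum.inr (Sum.inr w))) := by
        intro w
        by_cases hw : w ∈ T <;> simp [hw]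
      rw [hjx, hjy] at h1
      simp only [neg_mul, Finset.sum_neg_distrib] at h2
      rw [Finset.sum_congr rfl (fun w _ => hneg w)] at h2
      rw [Finset.sum_neg_distrib] at h2
      rw [hjx, hjy] at h2
      have : ∑ i, (if i ∈ T then gradYg g i zbar j else 0) * mu i
          = ∑ w, (if w ∈ T then gradYg g w zbar j else 0) * x (Sum.inr (Sum.inr w)) := rfl
      rw [this]
      linarith
    have hmurow : ∀ i ∈ al, 0 ≤ mu i := by
      intro i hi
      have h1 := hx (Sum.inr (Sum.inr (Sum.inr (Sum.inr (Sum.inr (Sum.inr i))))))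
      rw [hv] at h1
      simp only [Sum.elim_inl, Sum.elim_inr, if_pos hi] at h1
      rw [hrowM, dsum3_dot] at h1
      simp only [zero_mul, Finset.sum_const_zero, zero_add] at h1
      have h2 : ∑ i', (if i' = i then (-1:ℝ) else 0) * x (Sum.inr (Sum.inr i'))
          = -mu i := by
        rw [Finset.sum_eq_single i]
        · simp [hmu]
        · intro b _ hb
          simp [hb]
        · intro hnot
          exact absurd (Finset.mem_univ i) hnot
      rw [h2] at h1
      linarith
    -- membership of (dx, dy) in the feasible tangent cone
    have hdirdy : dy ∈ dirCrit g zbar lam dx := by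
      intro i hgi
      constructor
      · intro hl0
        have h1 : i ∈ al ∪ abar := by rw [hu]; exact ⟨hgi, hl0⟩
        rcases h1 with h1 | h1
        · have : i ∈ T := by rw [hTdef]; exact Or.inl h1
          rw [hTrow i this]
        · exact habarrow i h1
      · intro hlpos
        have : i ∈ T := by rw [hTdef]; exact Or.inr ⟨hgi, hlpos⟩
        exact hTrow i this
    have hsolves : solvesAVI F g zbar lam dx dy := by
      refine ⟨hdirdy, ?_⟩
      intro vv hvv
      have hW : ∀ j, (jacLx F g zbar lam dx + jacLy F g zbar lam dy) j
          = -∑ i, (if i ∈ T then gradYg g i zbar j else 0) * mu i := by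
        intro j
        have := hErow j
        have h2 : (jacLx F g zbar lam dx + jacLy F g zbar lam dy) j
            = jacLx F g zbar lam dx j + jacLy F g zbar lam dy j := rfl
        rw [h2]
        linarith
      unfold dotp
      rw [Finset.sum_congr rfl (fun j _ => by rw [hW j])]
      have hswap : ∑ j, -(∑ i, (if i ∈ T then gradYg g i zbar j else 0) * mu i)
            * (vv - dy) j
          = -∑ i, (if i ∈ T then mu i * dgY g i zbar (vv - dy) else 0) := by
        have h1 : ∀ j, -(∑ i, (if i ∈ T then gradYg g i zbar j else 0) * mu i)
              * (vv - dy) j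
            = -(∑ i, (if i ∈ T then gradYg g i zbar j * mu i * (vv - dy) j else 0)) := by
          intro j
          rw [neg_mul, Finset.sum_mul]
          congr 1
          refine Finset.sum_congr rfl fun i _ => ?_
          by_cases hi : i ∈ T <;> simp [hi]
        rw [Finset.sum_congr rfl fun j _ => h1 j]
        rw [Finset.sum_neg_distrib]
        congr 1
        rw [Finset.sum_comm]
        refine Finset.sum_congr rfl fun i _ => ?_
        by_cases hi : i ∈ T
        · simp only [if_pos hi]
          rw [dgY_expand, Finset.mul_sum]
          refine Finset.sum_congr rfl fun j _ => ?_
          have : (vv - dy) j = vv j - dy j := rfl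
          ring
        · simp [hi]
      rw [hswap]
      rw [neg_nonneg]
      refine Finset.sum_nonpos fun i _ => ?_
      by_cases hi : i ∈ T
      · simp only [if_pos hi]
        have hiT := hi
        rw [hTdef] at hiT
        rcases hiT with h1 | h1
        · obtain ⟨hgi, hl0⟩ := halsub i h1
          have hvle : dgX g i zbar dx + dgY g i zbar vv ≤ 0 := (hvv i hgi).1 hl0
          have hdyeq : dgX g i zbar dx + dgY g i zbar dy = 0 := hTrow i hi
          have hsub : dgY g i zbar (vv - dy) = dgY g i zbar vv - dgY g i zbar dy := by
            have := dgY_add_smul g i zbar vv dy (-1)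
            have h3 : vv + (-1 : ℝ) • dy = vv - dy := by
              rw [neg_one_smul]; rfl
            rw [h3] at this
            rw [this]; ring
          rw [hsub]
          have := hmurow i h1
          nlinarith
        · obtain ⟨hgi, hlpos⟩ := h1
          have hveq : dgX g i zbar dx + dgY g i zbar vv = 0 := (hvv i hgi).2 hlpos
          have hdyeq : dgX g i zbar dx + dgY g i zbar dy = 0 := hTrow i hi
          have hsub : dgY g i zbar (vv - dy) = dgY g i zbar vv - dgY g i zbar dy := by
            have := dgY_add_smul g i zbar vv dy (-1)
            have h3 : vv + (-1 : ℝ) • dy = vv - dy := by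
              rw [neg_one_smul]; rfl
            rw [h3] at this
            rw [this]; ring
          rw [hsub]
          have : dgY g i zbar vv - dgY g i zbar dy = 0 := by linarith
          rw [this, mul_zero]
      · simp [hi]
    have hdz : (dx, dy) ∈ tangentCone (feasSet F g Z) zbar := by
      rw [hfullCQ]
      constructor
      · exact mem_tangentCone_poly G H a Z hZ zbar hzbar.1 (dx, dy) hZrow
      · exact Set.mem_iUnion₂.mpr ⟨lam, hlam, hsolves⟩
    have hpos := hstat (dx, dy) hdz
    rw [hc, dsum3_dot]
    simp only [zero_mul, Finset.sum_const_zero, add_zero]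
    rw [df_expand f zbar dx dy] at hpos
    have h2 : ∑ p, fderiv ℝ f zbar (Pi.single p 1, 0) * x (Sum.inl p)
        = ∑ p, dx p * fderiv ℝ f zbar (Pi.single p 1, 0) :=
      Finset.sum_congr rfl fun p _ => mul_comm _ _
    have h3 : ∑ q, fderiv ℝ f zbar (0, Pi.single q 1) * x (Sum.inr (Sum.inl q))
        = ∑ q, dy q * fderiv ℝ f zbar (0, Pi.single q 1) :=
      Finset.sum_congr rfl fun q _ => mul_comm _ _
    rw [h2, h3]
    linarith
  obtain ⟨u, hu0, hid⟩ := farkas_dotp v c hfar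
  -- names for the blocks of multipliers
  set u1 : Fin s → ℝ := fun r => u (Sum.inl r) with hu1
  set u2 : Fin l → ℝ := fun i => u (Sum.inr (Sum.inl i)) with hu2
  set u3 : Fin l → ℝ := fun i => u (Sum.inr (Sum.inr (Sum.inl i))) with hu3
  set u4 : Fin l → ℝ := fun i => u (Sum.inr (Sum.inr (Sum.inr (Sum.inl i)))) with hu4
  set u5 : Fin m → ℝ := fun j => u (Sum.inr (Sum.inr (Sum.inr (Sum.inr (Sum.inl j))))) with hu5
  set u6 : Fin m → ℝ := fun j =>
    u (Sum.inr (Sum.inr (Sum.inr (Sum.inr (Sum.inr (Sum.inl j)))))) with hu6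
  set u7 : Fin l → ℝ := fun i =>
    u (Sum.inr (Sum.inr (Sum.inr (Sum.inr (Sum.inr (Sum.inr i)))))) with hu7
  set ζ : Vec s := fun r =>
    if Matrix.mulVec G zbar.1 r + Matrix.mulVec H zbar.2 r + a r = 0 then u1 r else 0 with hζ
  set η : Vec l := fun i => (if i ∈ abar then u2 i else 0)
    + (if i ∈ T then u3 i - u4 i else 0) with hη
  set π : Vec m := fun j => u6 j - u5 j with hπ
  -- the Farkas identity, decomposed at each coordinate
  have hsplit : ∀ t, c t
      + (∑ r, u1 r * v (Sum.inl r) t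
      + (∑ i, u2 i * v (Sum.inr (Sum.inl i)) t
      + (∑ i, u3 i * v (Sum.inr (Sum.inr (Sum.inl i))) t
      + (∑ i, u4 i * v (Sum.inr (Sum.inr (Sum.inr (Sum.inl i)))) t
      + (∑ j, u5 j * v (Sum.inr (Sum.inr (Sum.inr (Sum.inr (Sum.inl j))))) t
      + (∑ j, u6 j * v (Sum.inr (Sum.inr (Sum.inr (Sum.inr (Sum.inr (Sum.inl j)))))) t
      + ∑ i, u7 i * v (Sum.inr (Sum.inr (Sum.inr (Sum.inr (Sum.inr (Sum.inr i)))))) t)))))) = 0 := by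
    intro t
    have := hid t
    rw [Fintype.sum_sum_type, Fintype.sum_sum_type, Fintype.sum_sum_type,
      Fintype.sum_sum_type, Fintype.sum_sum_type, Fintype.sum_sum_type] at this
    convert this using 2
  -- decompose the identity at the three kinds of coordinates
  refine ⟨ζ, η, π, ?_, ?_, ?_, ?_, ?_, ?_, ?_, ?_⟩
  · -- x-coordinates
    intro p
    have hp := hsplit (Sum.inl p)
    rw [hv, hc] at hp
    simp only [Sum.elim_inl, Sum.elim_inr] at hp
    rw [hrowZ, hrowg, hrowgneg, hrowE, hrowEneg, hrowM] at hp
    simp only [ite_apply, Pi.zero_apply, dsum3, Sum.elim_inl, Sum.elim_inr, ite_self,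
      mul_zero, Finset.sum_const_zero, add_zero] at hp
    have hS1 : ∑ r, G r p * ζ r
        = ∑ r, u1 r * (if Matrix.mulVec G zbar.1 r + Matrix.mulVec H zbar.2 r + a r = 0
            then G r p else 0) := by
      refine Finset.sum_congr rfl fun r _ => ?_
      simp only [hζ]
      by_cases h : Matrix.mulVec G zbar.1 r + Matrix.mulVec H zbar.2 r + a r = 0 <;>
        simp [h, mul_comm]
    have hS234 : ∑ i, η i * dgX g i zbar (Pi.single p 1)
        = (∑ i, u2 i * (if i ∈ abar then dgX g i zbar (Pi.single p 1) else 0))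
          + ((∑ i, u3 i * (if i ∈ T then dgX g i zbar (Pi.single p 1) else 0))
          + (∑ i, u4 i * (if i ∈ T then -dgX g i zbar (Pi.single p 1) else 0))) := by
      rw [← Finset.sum_add_distrib, ← Finset.sum_add_distrib]
      refine Finset.sum_congr rfl fun i _ => ?_
      simp only [hη]
      by_cases h1 : i ∈ abar <;> by_cases h2 : i ∈ T <;> simp [h1, h2] <;> ring
    have hS56 : ∑ j, π j * jacLx F g zbar lam (Pi.single p 1) j
        = -((∑ j, u5 j * jacLx F g zbar lam (Pi.single p 1) j)
          + (∑ j, u6 j * (-jacLx F g zbar lam (Pi.single p 1) j))) := by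
      rw [← Finset.sum_add_distrib, ← Finset.sum_neg_distrib]
      refine Finset.sum_congr rfl fun j _ => ?_
      simp only [hπ]
      ring
    linarith [hp, hS1, hS234, hS56]
  · -- y-coordinates
    intro q
    have hp := hsplit (Sum.inr (Sum.inl q))
    rw [hv, hc] at hp
    simp only [Sum.elim_inl, Sum.elim_inr] at hp
    rw [hrowZ, hrowg, hrowgneg, hrowE, hrowEneg, hrowM] at hp
    simp only [ite_apply, Pi.zero_apply, dsum3, Sum.elim_inl, Sum.elim_inr, ite_self,
      mul_zero, Finset.sum_const_zero, add_zero] at hp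
    have hS1 : ∑ r, H r q * ζ r
        = ∑ r, u1 r * (if Matrix.mulVec G zbar.1 r + Matrix.mulVec H zbar.2 r + a r = 0
            then H r q else 0) := by
      refine Finset.sum_congr rfl fun r _ => ?_
      simp only [hζ]
      by_cases h : Matrix.mulVec G zbar.1 r + Matrix.mulVec H zbar.2 r + a r = 0 <;>
        simp [h, mul_comm]
    have hS234 : ∑ i, η i * dgY g i zbar (Pi.single q 1)
        = (∑ i, u2 i * (if i ∈ abar then dgY g i zbar (Pi.single q 1) else 0))
          + ((∑ i, u3 i * (if i ∈ T then dgY g i zbar (Pi.single q 1) else 0))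
          + (∑ i, u4 i * (if i ∈ T then -dgY g i zbar (Pi.single q 1) else 0))) := by
      rw [← Finset.sum_add_distrib, ← Finset.sum_add_distrib]
      refine Finset.sum_congr rfl fun i _ => ?_
      simp only [hη]
      by_cases h1 : i ∈ abar <;> by_cases h2 : i ∈ T <;> simp [h1, h2] <;> ring
    have hS56 : ∑ j, π j * jacLy F g zbar lam (Pi.single q 1) j
        = -((∑ j, u5 j * jacLy F g zbar lam (Pi.single q 1) j)
          + (∑ j, u6 j * (-jacLy F g zbar lam (Pi.single q 1) j))) := by
      rw [← Finset.sum_add_distrib, ← Finset.sum_neg_distrib]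
      refine Finset.sum_congr rfl fun j _ => ?_
      simp only [hπ]
      ring
    linarith [hp, hS1, hS234, hS56]
  · -- π condition on al
    intro i hial
    have hiT : i ∈ T := by rw [hTdef]; exact Or.inl hial
    have hp := hsplit (Sum.inr (Sum.inr i))
    rw [hv, hc] at hp
    simp only [Sum.elim_inl, Sum.elim_inr] at hp
    rw [hrowZ, hrowg, hrowgneg, hrowE, hrowEneg, hrowM] at hp
    simp only [ite_apply, Pi.zero_apply, dsum3, Sum.elim_inl, Sum.elim_inr, ite_self,
      mul_zero, Finset.sum_const_zero, zero_add, add_zero, if_pos hiT] at hp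
    have hS7 : ∑ i', u7 i' * (if i' ∈ al then (if i = i' then (-1:ℝ) else 0) else 0)
        = -u7 i := by
      rw [Finset.sum_eq_single i]
      · simp [hial]
      · intro b _ hb
        have : ¬(i = b) := fun hc => hb hc.symm
        simp [this]
      · intro hnot
        exact absurd (Finset.mem_univ i) hnot
    rw [hS7] at hp
    have hπsum : ∑ j, π j * gradYg g i zbar j
        = -((∑ j, u5 j * gradYg g i zbar j) + (∑ j, u6 j * (-gradYg g i zbar j))) := by
      rw [← Finset.sum_add_distrib, ← Finset.sum_neg_distrib]
      refine Finset.sum_congr rfl fun j _ => ?_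
      simp only [hπ]
      ring
    rw [dgY_expand]
    have hu7 : 0 ≤ u7 i := hu0 _
    linarith [hp, hπsum]
  · -- π condition on the strongly active set
    intro i hgi hlpos
    have hiT : i ∈ T := by rw [hTdef]; exact Or.inr ⟨hgi, hlpos⟩
    have hial : i ∉ al := by
      intro hc
      have := (halsub i hc).2
      rw [this] at hlpos
      exact lt_irrefl 0 hlpos
    have hp := hsplit (Sum.inr (Sum.inr i))
    rw [hv, hc] at hp
    simp only [Sum.elim_inl, Sum.elim_inr] at hp
    rw [hrowZ, hrowg, hrowgneg, hrowE, hrowEneg, hrowM] at hp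
    simp only [ite_apply, Pi.zero_apply, dsum3, Sum.elim_inl, Sum.elim_inr, ite_self,
      mul_zero, Finset.sum_const_zero, zero_add, add_zero, if_pos hiT] at hp
    have hS7 : ∑ i', u7 i' * (if i' ∈ al then (if i = i' then (-1:ℝ) else 0) else 0)
        = 0 := by
      refine Finset.sum_eq_zero fun b _ => ?_
      by_cases hb : b ∈ al
      · have : ¬(i = b) := fun hc => hial (hc ▸ hb)
        simp [hb, this]
      · simp [hb]
    rw [hS7] at hp
    have hπsum : ∑ j, π j * gradYg g i zbar j
        = -((∑ j, u5 j * gradYg g i zbar j) + (∑ j, u6 j * (-gradYg g i zbar j))) := by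
      rw [← Finset.sum_add_distrib, ← Finset.sum_neg_distrib]
      refine Finset.sum_congr rfl fun j _ => ?_
      simp only [hπ]
      ring
    rw [dgY_expand]
    linarith [hp, hπsum]
  · -- η nonnegative on abar
    intro i hi
    have hiT : i ∉ T := by
      rw [hTdef]
      rintro (h | h)
      · have : i ∈ al ∩ abar := ⟨h, hi⟩
        rw [hdis] at this
        exact absurd this (Set.notMem_empty i)
      · have := (habarsub i hi).2
        rw [this] at h
        exact lt_irrefl 0 h.2
    simp only [hη, if_pos hi, if_neg hiT, add_zero]
    exact hu0 _
  · -- η vanishes on inactive constraints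
    intro i hgi
    have hiabar : i ∉ abar := fun hc => hgi (habarsub i hc).1
    have hiT : i ∉ T := by
      rw [hTdef]
      rintro (h | h)
      · exact hgi (halsub i h).1
      · exact hgi h.1
    simp [hη, hiabar, hiT]
  · -- ζ nonnegative
    intro r
    simp only [hζ]
    split
    · exact hu0 _
    · exact le_rfl
  · -- complementarity
    refine Finset.sum_eq_zero fun r _ => ?_
    simp only [hζ]
    by_cases h : Matrix.mulVec G zbar.1 r + Matrix.mulVec H zbar.2 r + a r = 0
    · rw [if_pos h, h, mul_zero]
    · rw [if_neg h, zero_mul]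

end MpecAux

/-- Theorem 3.3.4: primal–dual characterization of MPEC stationarity under SBCQ and
the full CQ, for polyhedral upper level `Z = {(x,y) : Gx + Hy + a ≤ 0}`. -/
theorem stmt_6 {n m l s : ℕ}
    (f : Vec n × Vec m → ℝ)
    (F : Vec n × Vec m → Vec m) (g : Vec n × Vec m → Vec l)
    (G : Matrix (Fin s) (Fin n) ℝ) (H : Matrix (Fin s) (Fin m) ℝ) (a : Vec s)
    (Z : Set (Vec n × Vec m))
    (hZ : Z = {z : Vec n × Vec m |
      ∀ r, Matrix.mulVec G z.1 r + Matrix.mulVec H z.2 r + a r ≤ 0})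
    (hf : ContDiff ℝ 1 f) (hF : ContDiff ℝ 1 F) (hg : ContDiff ℝ 2 g)
    (zbar : Vec n × Vec m) (hzbar : zbar ∈ feasSet F g Z)
    (hSBCQ : SBCQ F g Z zbar)
    (hfullCQ : tangentCone (feasSet F g Z) zbar = mpecLinCone F g Z zbar) :
    -- `z̄` is a stationary point of the MPEC ...
    (∀ dz ∈ tangentCone (feasSet F g Z) zbar, 0 ≤ fderiv ℝ f zbar dz) ↔
    -- ... iff for every multiplier and every partition of `I₀(z̄,λ)` the
    -- primal–dual system below is solvable.
    (∀ lam ∈ multSet F g zbar, ∀ al abar : Set (Fin l),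
      al ∪ abar = {i | g zbar i = 0 ∧ lam i = 0} → al ∩ abar = ∅ →
      ∃ (ζ : Vec s) (η : Vec l) (π : Vec m),
        (∀ p : Fin n,
          fderiv ℝ f zbar (Pi.single p 1, 0) + (∑ r, G r p * ζ r) +
            (∑ i, η i * dgX g i zbar (Pi.single p 1)) =
          ∑ j, π j * jacLx F g zbar lam (Pi.single p 1) j) ∧
        (∀ q : Fin m,
          fderiv ℝ f zbar (0, Pi.single q 1) + (∑ r, H r q * ζ r) +
            (∑ i, η i * dgY g i zbar (Pi.single q 1)) =
          ∑ j, π j * jacLy F g zbar lam (Pi.single q 1) j) ∧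
        (∀ i ∈ al, dgY g i zbar π ≤ 0) ∧
        (∀ i, g zbar i = 0 → 0 < lam i → dgY g i zbar π = 0) ∧
        (∀ i ∈ abar, 0 ≤ η i) ∧
        (∀ i, g zbar i ≠ 0 → η i = 0) ∧
        (∀ r, 0 ≤ ζ r) ∧
        (∑ r, ζ r * (Matrix.mulVec G zbar.1 r + Matrix.mulVec H zbar.2 r + a r) = 0)) := by
  constructor
  · intro hstat lam hlam al abar hu hdis
    exact MpecAux.forward_dir f F g G H a Z hZ zbar hzbar hfullCQ hstat lam hlam al abar hu hdis
  · intro hdual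
    exact MpecAux.reverse_dir f F g G H a Z hZ zbar hzbar hfullCQ hdual
end
end

section
/- Let 𝓕 = {(x, y, λ) ∈ ℝ³ : y − λ = 0, yλ = 0, y ≥ 0, λ ≥ 0}. Then: (1) 𝓕 = ℝ × {0} × {0}; (2) for every x̄ ∈ ℝ, the tangent cone satisfies T((x̄,0,0); 𝓕) = ℝ × {0} × {0}; (3) the NLP linearized cone at (x̄,0,0), namely 𝓛 = {(dx, dy, dλ) ∈ ℝ³ : dy − dλ = 0, dy ≥ 0, dλ ≥ 0} (the gradient of the equality yλ = 0 vanishes at (x̄,0,0)), equals {(dx, t, t) : dx ∈ ℝ, t ≥ 0}; and (4) T((x̄,0,0); 𝓕) is a proper subset of 𝓛, so the basic NLP constraint qualification (equality of tangent and linearized cones) fails at every feasible point. -/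
open Filter Topology

lemma tc_eq (Feas : Set (ℝ × ℝ × ℝ))
    (hF : Feas = {p : ℝ × ℝ × ℝ | p.2.1 = 0 ∧ p.2.2 = 0}) (xbar : ℝ) :
    tangentCone Feas (xbar, 0, 0) = {d : ℝ × ℝ × ℝ | d.2.1 = 0 ∧ d.2.2 = 0} := by
  ext d
  constructor
  · rintro ⟨zs, ts, hmem, _, _, _, hlim⟩
    have h21 : ∀ k, (zs k).2.1 = 0 := fun k => ((hF ▸ hmem k)).1
    have h22 : ∀ k, (zs k).2.2 = 0 := fun k => ((hF ▸ hmem k)).2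
    have heq : (fun k => ((ts k)⁻¹ • (zs k - (xbar, 0, 0)) : ℝ × ℝ × ℝ).2) =
        fun _ => (0, 0) := by
      funext k
      simp [Prod.ext_iff, h21 k, h22 k]
    have h2 : Tendsto (fun k => ((ts k)⁻¹ • (zs k - (xbar, 0, 0)) : ℝ × ℝ × ℝ).2)
        atTop (𝓝 d.2) := (continuous_snd.tendsto d).comp hlim
    rw [heq] at h2
    have := tendsto_nhds_unique h2 tendsto_const_nhds
    exact ⟨by rw [this], by rw [this]⟩
  · rintro ⟨h1, h2⟩
    refine ⟨fun k => (xbar + (k + 1 : ℝ)⁻¹ * d.1, 0, 0), fun k => (k + 1 : ℝ)⁻¹,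
      fun k => by simp [hF], ?_, fun k => by positivity, ?_, ?_⟩
    · have : Tendsto (fun k : ℕ => ((k : ℝ) + 1)⁻¹) atTop (𝓝 0) :=
        tendsto_one_div_add_atTop_nhds_zero_nat.congr (by intro n; rw [one_div])
      have hx : Tendsto (fun k : ℕ => xbar + ((k : ℝ) + 1)⁻¹ * d.1) atTop (𝓝 xbar) := by
        have := (this.mul_const d.1).const_add xbar
        simpa using this
      rw [nhds_prod_eq]
      exact hx.prodMk (tendsto_const_nhds : Tendsto (fun _ : ℕ => ((0 : ℝ), (0 : ℝ))) atTop (𝓝 (0, 0)))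
    · exact tendsto_one_div_add_atTop_nhds_zero_nat.congr (by intro n; rw [one_div])
    · have heq : (fun k : ℕ => (((k : ℝ) + 1)⁻¹)⁻¹ •
          (((xbar + ((k : ℝ) + 1)⁻¹ * d.1, 0, 0) : ℝ × ℝ × ℝ) - (xbar, 0, 0))) =
          fun _ => d := by
        funext k
        have hk : ((k : ℝ) + 1) ≠ 0 := by positivity
        ext <;> simp [Prod.ext_iff, hk, h1, h2]
      rw [heq]
      exact tendsto_const_nhds

/-- KKT reformulation of the MPEC with `F(x,y) = y`, `g(x,y) = −y`:
(1) the feasible set is `ℝ × {0} × {0}`; (2) the tangent cone there is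
`ℝ × {0} × {0}`; (3) the NLP linearized cone is `{(dx,t,t) : t ≥ 0}`;
(4) the tangent cone is a proper subset of the linearized cone, so the basic NLP
constraint qualification fails at every feasible point. -/
theorem stmt_9
    (Feas : Set (ℝ × ℝ × ℝ))
    (hFeas : Feas = {p : ℝ × ℝ × ℝ |
      p.2.1 - p.2.2 = 0 ∧ p.2.1 * p.2.2 = 0 ∧ 0 ≤ p.2.1 ∧ 0 ≤ p.2.2})
    (Lin : Set (ℝ × ℝ × ℝ))
    (hLin : Lin = {d : ℝ × ℝ × ℝ | d.2.1 - d.2.2 = 0 ∧ 0 ≤ d.2.1 ∧ 0 ≤ d.2.2}) :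
    Feas = {p : ℝ × ℝ × ℝ | p.2.1 = 0 ∧ p.2.2 = 0} ∧
    (∀ xbar : ℝ, tangentCone Feas (xbar, 0, 0) =
      {d : ℝ × ℝ × ℝ | d.2.1 = 0 ∧ d.2.2 = 0}) ∧
    Lin = {d : ℝ × ℝ × ℝ | ∃ t : ℝ, 0 ≤ t ∧ d.2.1 = t ∧ d.2.2 = t} ∧
    (∀ xbar : ℝ, tangentCone Feas (xbar, 0, 0) ⊂ Lin) := by
  have hF : Feas = {p : ℝ × ℝ × ℝ | p.2.1 = 0 ∧ p.2.2 = 0} := by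
    rw [hFeas]; ext p
    constructor
    · rintro ⟨he, hm, _, _⟩
      have : p.2.1 = p.2.2 := by linarith
      have h0 : p.2.1 * p.2.1 = 0 := by rw [this] at hm ⊢; exact hm
      have h1 : p.2.1 = 0 := by nlinarith
      exact ⟨h1, by rw [← this, h1]⟩
    · rintro ⟨h1, h2⟩; exact ⟨by rw [h1, h2]; ring, by rw [h1]; ring, h1.ge, h2.ge⟩
  have htc := tc_eq Feas hF
  refine ⟨hF, htc, ?_, ?_⟩
  · rw [hLin]; ext d
    constructor
    · rintro ⟨he, h1, h2⟩; exact ⟨d.2.1, h1, rfl, by linarith⟩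
    · rintro ⟨t, ht, h1, h2⟩; exact ⟨by rw [h1, h2]; ring, h1 ▸ ht, h2 ▸ ht⟩
  · intro xbar
    rw [htc xbar, hLin]
    constructor
    · rintro d ⟨h1, h2⟩; exact ⟨by rw [h1, h2]; ring, h1.ge, h2.ge⟩
    · intro hsub
      have : ((0, 1, 1) : ℝ × ℝ × ℝ) ∈ {d : ℝ × ℝ × ℝ | d.2.1 = 0 ∧ d.2.2 = 0} := by
        apply hsub; constructor <;> norm_num
      simpa using this.1
end

section
/- Let 𝓕 = {(x, y₁, y₂) ∈ ℝ³ : y₁ ≥ 0, x² + x + y₁ ≥ 0, y₁(x² + x + y₁) = 0, y₂ ≥ 0, x³ + y₂ ≥ 0, y₂(x³ + y₂) = 0}. Then the tangent cone to 𝓕 at the origin is the nonconvex union of two rays spanned positively: T((0,0,0); 𝓕) = {(a, 0, 0) : a ≥ 0} ∪ {(−a, a, 0) : a ≥ 0}. -/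
open Filter Topology

/-- The tangent cone at the origin to the feasible set of the MPEC with lower-level
complementarity system `0 ≤ y₁ ⟂ x² + x + y₁ ≥ 0`, `0 ≤ y₂ ⟂ x³ + y₂ ≥ 0` is the
nonconvex union of two rays. -/
theorem stmt_11
    (Feas : Set (ℝ × ℝ × ℝ))
    (hFeas : Feas = {p : ℝ × ℝ × ℝ |
      0 ≤ p.2.1 ∧ 0 ≤ p.1 ^ 2 + p.1 + p.2.1 ∧ p.2.1 * (p.1 ^ 2 + p.1 + p.2.1) = 0 ∧
      0 ≤ p.2.2 ∧ 0 ≤ p.1 ^ 3 + p.2.2 ∧ p.2.2 * (p.1 ^ 3 + p.2.2) = 0}) :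
    tangentCone Feas (0, 0, 0) =
      {d : ℝ × ℝ × ℝ | ∃ a : ℝ, 0 ≤ a ∧ d = (a, 0, 0)} ∪
      {d : ℝ × ℝ × ℝ | ∃ a : ℝ, 0 ≤ a ∧ d = (-a, a, 0)} := by
  subst hFeas
  ext d
  simp only [Set.mem_union, Set.mem_setOf_eq, tangentCone]
  constructor
  · rintro ⟨zs, ts, hmem, hz, hpos, hts, hlim⟩
    set u : ℕ → ℝ := fun k => (ts k)⁻¹ with hu
    have hu0 : ∀ k, 0 ≤ u k := fun k => le_of_lt (inv_pos.2 (hpos k))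
    -- component limits of zs
    have hx : Tendsto (fun k => (zs k).1) atTop (𝓝 0) := by
      have := (continuous_fst.tendsto _).comp hz
      simpa [Function.comp_def] using this
    -- component limits of scaled sequence
    have h1 : Tendsto (fun k => u k * (zs k).1) atTop (𝓝 d.1) := by
      have := (continuous_fst.tendsto _).comp hlim
      simpa [Prod.smul_def, smul_eq_mul, Function.comp_def] using this
    have h2 : Tendsto (fun k => u k * (zs k).2.1) atTop (𝓝 d.2.1) := by
      have := (continuous_fst.tendsto _).comp ((continuous_snd.tendsto _).comp hlim)
      simpa [Prod.smul_def, smul_eq_mul, Function.comp_def] using this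
    have h3 : Tendsto (fun k => u k * (zs k).2.2) atTop (𝓝 d.2.2) := by
      have := (continuous_snd.tendsto _).comp ((continuous_snd.tendsto _).comp hlim)
      simpa [Prod.smul_def, smul_eq_mul, Function.comp_def] using this
    -- u * x^2 → 0 and u * x^3 → 0
    have hxsq : Tendsto (fun k => u k * (zs k).1 ^ 2) atTop (𝓝 0) := by
      have := hx.mul h1
      have heq : (fun k => (zs k).1 * (u k * (zs k).1)) = fun k => u k * (zs k).1 ^ 2 := by
        funext k; ring
      rw [heq] at this
      simpa using this
    have hxcube : Tendsto (fun k => u k * (zs k).1 ^ 3) atTop (𝓝 0) := by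
      have := (hx.mul hx).mul h1
      have heq : (fun k => (zs k).1 * (zs k).1 * (u k * (zs k).1))
          = fun k => u k * (zs k).1 ^ 3 := by
        funext k; ring
      rw [heq] at this
      simpa using this
    -- scaled first constraint sum
    have hsum1 : Tendsto (fun k => u k * ((zs k).1 ^ 2 + (zs k).1 + (zs k).2.1))
        atTop (𝓝 (d.1 + d.2.1)) := by
      have := (hxsq.add h1).add h2
      have heq : (fun k => u k * (zs k).1 ^ 2 + u k * (zs k).1 + u k * (zs k).2.1)
          = fun k => u k * ((zs k).1 ^ 2 + (zs k).1 + (zs k).2.1) := by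
        funext k; ring
      rw [heq] at this
      simpa using this
    have hsum2 : Tendsto (fun k => u k * ((zs k).1 ^ 3 + (zs k).2.2))
        atTop (𝓝 (d.2.2)) := by
      have := hxcube.add h3
      have heq : (fun k => u k * (zs k).1 ^ 3 + u k * (zs k).2.2)
          = fun k => u k * ((zs k).1 ^ 3 + (zs k).2.2) := by
        funext k; ring
      rw [heq] at this
      simpa using this
    -- sign facts
    have hd2 : 0 ≤ d.2.1 :=
      ge_of_tendsto' h2 (fun k => mul_nonneg (hu0 k) (hmem k).1)
    have hsumnn : 0 ≤ d.1 + d.2.1 :=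
      ge_of_tendsto' hsum1 (fun k => mul_nonneg (hu0 k) (hmem k).2.1)
    -- complementarity in the limit
    have hcomp1 : d.2.1 * (d.1 + d.2.1) = 0 := by
      have hmul := h2.mul hsum1
      have heq : (fun k => (u k * (zs k).2.1) * (u k * ((zs k).1 ^ 2 + (zs k).1 + (zs k).2.1)))
          = fun _ => (0 : ℝ) := by
        funext k
        have h0 := (hmem k).2.2.1
        have : (u k * (zs k).2.1) * (u k * ((zs k).1 ^ 2 + (zs k).1 + (zs k).2.1))
            = u k ^ 2 * ((zs k).2.1 * ((zs k).1 ^ 2 + (zs k).1 + (zs k).2.1)) := by ring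
        rw [this, h0, mul_zero]
      rw [heq] at hmul
      exact tendsto_nhds_unique hmul tendsto_const_nhds
    have hd3 : d.2.2 = 0 := by
      have hmul := h3.mul hsum2
      have heq : (fun k => (u k * (zs k).2.2) * (u k * ((zs k).1 ^ 3 + (zs k).2.2)))
          = fun _ => (0 : ℝ) := by
        funext k
        have h0 := (hmem k).2.2.2.2.2
        have : (u k * (zs k).2.2) * (u k * ((zs k).1 ^ 3 + (zs k).2.2))
            = u k ^ 2 * ((zs k).2.2 * ((zs k).1 ^ 3 + (zs k).2.2)) := by ring
        rw [this, h0, mul_zero]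
      rw [heq] at hmul
      have h0 : d.2.2 * d.2.2 = 0 := tendsto_nhds_unique hmul tendsto_const_nhds
      nlinarith [h0]
    rcases mul_eq_zero.1 hcomp1 with h | h
    · left
      refine ⟨d.1, by linarith, ?_⟩
      exact Prod.ext rfl (Prod.ext h hd3)
    · right
      refine ⟨d.2.1, hd2, ?_⟩
      refine Prod.ext ?_ (Prod.ext rfl hd3)
      simp only
      linarith
  · rintro (⟨a, ha, rfl⟩ | ⟨a, ha, rfl⟩)
    · -- direction (a, 0, 0)
      refine ⟨fun k => (a / ((k : ℝ) + 1), 0, 0), fun k => 1 / ((k : ℝ) + 1),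
        ?_, ?_, ?_, ?_, ?_⟩
      · intro k
        have hk : (0 : ℝ) < (k : ℝ) + 1 := by positivity
        have hxk : 0 ≤ a / ((k : ℝ) + 1) := by positivity
        refine ⟨le_refl 0, ?_, by ring, le_refl 0, ?_, by ring⟩
        · nlinarith [sq_nonneg (a / ((k : ℝ) + 1))]
        · positivity
      · have h0 : Tendsto (fun k : ℕ => a / ((k : ℝ) + 1)) atTop (𝓝 0) := by
          have := tendsto_one_div_add_atTop_nhds_zero_nat.const_mul a
          simpa [div_eq_mul_inv, one_div, mul_comm] using this
        exact h0.prodMk_nhds (tendsto_const_nhds.prodMk_nhds tendsto_const_nhds)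
      · intro k; positivity
      · exact tendsto_one_div_add_atTop_nhds_zero_nat
      · have heq : (fun k : ℕ => (1 / ((k : ℝ) + 1))⁻¹ •
            ((a / ((k : ℝ) + 1), (0 : ℝ), (0 : ℝ)) - ((0 : ℝ), (0 : ℝ), (0 : ℝ))))
            = fun _ => ((a, 0, 0) : ℝ × ℝ × ℝ) := by
          funext k
          have hk : ((k : ℝ) + 1) ≠ 0 := by positivity
          simp [Prod.smul_def, smul_eq_mul, Prod.ext_iff]
          field_simp
        rw [heq]
        exact tendsto_const_nhds
    · -- direction (-a, a, 0)
      set s : ℕ → ℝ := fun k => a * ((1 / ((k : ℝ) + 1)) * (1 / (a + 1))) with hs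
      have ha1 : (0 : ℝ) < a + 1 := by linarith
      have hsnn : ∀ k, 0 ≤ s k := by
        intro k
        have hk : (0 : ℝ) < (k : ℝ) + 1 := by positivity
        positivity
      have hsle : ∀ k, s k ≤ 1 := by
        intro k
        have hk : (1 : ℝ) ≤ (k : ℝ) + 1 := by
          have : (0 : ℝ) ≤ (k : ℝ) := Nat.cast_nonneg k
          linarith
        have hk0 : (0 : ℝ) < (k : ℝ) + 1 := by linarith
        show a * ((1 / ((k : ℝ) + 1)) * (1 / (a + 1))) ≤ 1
        have h1 : a * ((1 / ((k : ℝ) + 1)) * (1 / (a + 1))) = a / (((k : ℝ) + 1) * (a + 1)) := by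
          field_simp
        rw [h1]
        rw [div_le_one (by positivity)]
        nlinarith
      have hslim : Tendsto s atTop (𝓝 0) := by
        have := (tendsto_one_div_add_atTop_nhds_zero_nat.mul_const (1 / (a + 1))).const_mul a
        rw [hs]
        simpa using this
      refine ⟨fun k => (-(s k), s k - (s k) ^ 2, (s k) ^ 3),
        fun k => (1 / ((k : ℝ) + 1)) * (1 / (a + 1)), ?_, ?_, ?_, ?_, ?_⟩
      · intro k
        have hA := hsnn k
        have hB := hsle k
        refine ⟨?_, ?_, ?_, ?_, ?_, ?_⟩
        · show (0 : ℝ) ≤ s k - s k ^ 2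
          nlinarith
        · show (0 : ℝ) ≤ (-(s k)) ^ 2 + (-(s k)) + (s k - s k ^ 2)
          nlinarith
        · show (s k - s k ^ 2) * ((-(s k)) ^ 2 + (-(s k)) + (s k - s k ^ 2)) = 0
          ring
        · show (0 : ℝ) ≤ (s k) ^ 3
          positivity
        · show (0 : ℝ) ≤ (-(s k)) ^ 3 + (s k) ^ 3
          nlinarith
        · show (s k) ^ 3 * ((-(s k)) ^ 3 + (s k) ^ 3) = 0
          ring
      · have h2 : Tendsto (fun k => s k - (s k) ^ 2) atTop (𝓝 0) := by
          have := hslim.sub (hslim.mul hslim)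
          have heq : (fun k => s k - s k * s k) = fun k => s k - (s k) ^ 2 := by
            funext k; ring
          rw [heq] at this; simpa using this
        have h3 : Tendsto (fun k => (s k) ^ 3) atTop (𝓝 0) := by
          have := (hslim.mul hslim).mul hslim
          have heq : (fun k => s k * s k * s k) = fun k => (s k) ^ 3 := by
            funext k; ring
          rw [heq] at this; simpa using this
        have := hslim.neg.prodMk_nhds (h2.prodMk_nhds h3)
        simpa using this
      · intro k
        have hk : (0 : ℝ) < (k : ℝ) + 1 := by positivity
        positivity
      · have := tendsto_one_div_add_atTop_nhds_zero_nat.mul_const (1 / (a + 1))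
        simpa using this
      · have heq : (fun k : ℕ => ((1 / ((k : ℝ) + 1)) * (1 / (a + 1)))⁻¹ •
            (((-(s k), s k - (s k) ^ 2, (s k) ^ 3) : ℝ × ℝ × ℝ) - (0, 0, 0)))
            = fun k => ((-a, a - a * s k, a * (s k) ^ 2) : ℝ × ℝ × ℝ) := by
          funext k
          have hk : ((k : ℝ) + 1) ≠ 0 := by positivity
          have ha1' : (a + 1) ≠ 0 := ne_of_gt ha1
          simp only [Prod.smul_def, Prod.mk_sub_mk, sub_zero, smul_eq_mul, Prod.mk.injEq, hs]
          refine ⟨by field_simp, by field_simp, by field_simp⟩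
        rw [heq]
        have hA : Tendsto (fun k => a - a * s k) atTop (𝓝 a) := by
          have := (tendsto_const_nhds : Tendsto (fun _ : ℕ => a) atTop (𝓝 a)).sub
            (hslim.const_mul a)
          simpa only [mul_zero, sub_zero] using this
        have hB : Tendsto (fun k => a * (s k) ^ 2) atTop (𝓝 0) := by
          have := ((hslim.mul hslim).const_mul a)
          have heq2 : (fun k => a * (s k * s k)) = fun k => a * (s k) ^ 2 := by
            funext k; ring
          rw [heq2] at this; simpa using this
        exact tendsto_const_nhds.prodMk_nhds (hA.prodMk_nhds hB)
end
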